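/- arXiv:2312.15091 — 4 statements merged into one kernel-verified Lean document; each statement's English description precedes it below -/
import Mathlib

section
/- Under Assumptions 3 and 4, for each x > 0, almost surely lim_{n→∞} (Σ_{k=ν(n,i)}^{ν(Ñ(n,x),i)} α_k)/(Σ_{k=ν(n,j)}^{ν(Ñ(n,x),j)} α_k) = 1 for all i, j ∈ I. -/
open MeasureTheory Filter

namespace AsyncSA
open Finset

structure Setup (d : ℕ) where
  α : ℕ → ℝ
  Y : ℕ → Finset (Fin d)
  ν : ℕ → Fin d → ℕ
  N : ℕ → ℝ → ℕ
  n₀ : ℕ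
  Δ : ℝ
  B : ℝ
  hαpos : ∀ n, 0 < α n
  hα0 : Tendsto α atTop (nhds 0)
  hAtop : Tendsto (fun n => ∑ k ∈ Finset.range n, α k) atTop atTop
  hαanti : ∀ {a b : ℕ}, n₀ ≤ a → a ≤ b → α b ≤ α a
  hΔpos : 0 < Δ
  hB : ∀ n : ℕ, α ⌊Δ * (n : ℝ)⌋₊ ≤ B * α n
  hB1 : 1 ≤ B
  hAsum : ∀ ε > (0:ℝ), ∀ᶠ n : ℕ in atTop,
    |(∑ k ∈ Finset.range (⌊Δ * (n:ℝ)⌋₊ + 1), α k) / (∑ k ∈ Finset.range (n + 1), α k) - 1| ≤ ε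
  hYne : ∀ n, (Y n).Nonempty
  hν : ∀ n i, ν n i = ∑ k ∈ Finset.range (n + 1), if i ∈ Y k then 1 else 0
  hN : ∀ n q, N n q = sInf {m | n < m ∧ q ≤ ∑ k ∈ Finset.Icc n m, α k}
  hfreq : ∀ i, ∀ᶠ n : ℕ in atTop, Δ * (n:ℝ) ≤ (ν n i : ℝ)

namespace Setup

variable {d : ℕ} (S : Setup d)

/-- partial sums `A n = α 0 + ... + α n`. -/
def A (n : ℕ) : ℝ := ∑ k ∈ Finset.range (n+1), S.α k

/-- `SM n m = Σ_{k∈[n,m]} α k`. -/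
def SM (n m : ℕ) : ℝ := ∑ k ∈ Finset.Icc n m, S.α k

lemma A_pos (n : ℕ) : 0 < S.A n :=
  Finset.sum_pos (fun k _ => S.hαpos k) (by simp)

lemma A_mono : Monotone S.A := by
  intro a b hab
  exact Finset.sum_le_sum_of_subset_of_nonneg
    (Finset.range_subset_range.2 (by omega)) (fun k _ _ => (S.hαpos k).le)

lemma A_tendsto : Tendsto S.A atTop atTop :=
  S.hAtop.comp (tendsto_add_atTop_nat 1)

lemma A_sub (m m' : ℕ) (h : m ≤ m') :
    S.A m' - S.A m = ∑ k ∈ Finset.Ioc m m', S.α k := by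
  have : S.A m + ∑ k ∈ Finset.Ioc m m', S.α k = S.A m' := by
    unfold A
    rw [show Finset.Ioc m m' = Finset.Ico (m+1) (m'+1) by
      rw [← Finset.Icc_add_one_left_eq_Ioc, Finset.Ico_add_one_right_eq_Icc],
      Finset.range_eq_Ico, Finset.range_eq_Ico]
    exact Finset.sum_Ico_consecutive S.α (by omega : 0 ≤ m+1) (by omega : m+1 ≤ m'+1)
  linarith

lemma SM_eq (n m : ℕ) (h : n ≤ m) :
    S.SM n m = S.α n + (S.A m - S.A n) := by
  rw [S.A_sub n m h, SM, Finset.Icc_eq_cons_Ioc h, Finset.sum_cons]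

lemma Ioc_sum_nonneg (n m : ℕ) : 0 ≤ ∑ k ∈ Finset.Ioc n m, S.α k :=
  Finset.sum_nonneg fun k _ => (S.hαpos k).le

-- N basics
lemma N_set_nonempty (n : ℕ) (q : ℝ) : {m | n < m ∧ q ≤ S.SM n m}.Nonempty := by
  obtain ⟨m, hm⟩ := ((S.A_tendsto.eventually_ge_atTop (q + S.A n)).and
    (eventually_ge_atTop (n+1))).exists
  refine ⟨m, by omega, ?_⟩
  rw [S.SM_eq n m (by omega)]
  have := S.hαpos n
  linarith [hm.1]

lemma N_mem (n : ℕ) (q : ℝ) : n < S.N n q ∧ q ≤ S.SM n (S.N n q) := by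
  rw [S.hN]
  exact Nat.sInf_mem (S.N_set_nonempty n q)

lemma N_gt (n : ℕ) (q : ℝ) : n < S.N n q := (S.N_mem n q).1

lemma N_ge (n : ℕ) (q : ℝ) : q ≤ S.SM n (S.N n q) := (S.N_mem n q).2

lemma N_le_of (n m : ℕ) (q : ℝ) (h1 : n < m) (h2 : q ≤ S.SM n m) : S.N n q ≤ m := by
  rw [S.hN]; exact Nat.sInf_le ⟨h1, h2⟩

lemma N_min (n m : ℕ) (q : ℝ) (h1 : n < m) (h2 : m < S.N n q) : S.SM n m < q := by
  by_contra h
  have := S.N_le_of n m q h1 (le_of_not_gt h)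
  omega

lemma N_mono_q (n : ℕ) {q q' : ℝ} (h : q ≤ q') : S.N n q ≤ S.N n q' :=
  S.N_le_of n _ q (S.N_gt n q') (le_trans h (S.N_ge n q'))

lemma N_tendsto (q : ℝ) : Tendsto (fun n => S.N n q) atTop atTop :=
  tendsto_atTop_mono (fun n => (S.N_gt n q).le) tendsto_id

-- ν basics
lemma ν_succ (n : ℕ) (i : Fin d) :
    S.ν (n+1) i = S.ν n i + if i ∈ S.Y (n+1) then 1 else 0 := by
  rw [S.hν, S.hν, Finset.sum_range_succ]

lemma ν_mono (i : Fin d) : Monotone (fun n => S.ν n i) := by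
  apply monotone_nat_of_le_succ
  intro n
  rw [S.ν_succ]
  split <;> omega

lemma ν_mono' (i : Fin d) {n m : ℕ} (h : n ≤ m) : S.ν n i ≤ S.ν m i :=
  S.ν_mono i h

lemma ν_le (n : ℕ) (i : Fin d) : S.ν n i ≤ n + 1 := by
  rw [S.hν]
  calc ∑ k ∈ Finset.range (n+1), (if i ∈ S.Y k then 1 else 0)
      ≤ ∑ _k ∈ Finset.range (n+1), 1 := Finset.sum_le_sum (fun k _ => by split <;> omega)
    _ = n + 1 := by simp

lemma ev_floor : ∀ᶠ n : ℕ in atTop, ∀ i, ⌊S.Δ * (n:ℝ)⌋₊ ≤ S.ν n i := by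
  rw [Filter.eventually_all]
  intro i
  filter_upwards [S.hfreq i] with n hn
  exact Nat.floor_le_floor hn |>.trans (by simp)

lemma ν_tendsto (i : Fin d) : Tendsto (fun n => S.ν n i) atTop atTop := by
  apply tendsto_atTop_mono' _ _
    ((tendsto_nat_floor_atTop.comp (tendsto_natCast_atTop_atTop.const_mul_atTop S.hΔpos)))
  filter_upwards [S.ev_floor] with n hn using hn i


/-- cumulative stepsize through component `i`'s local clock. -/
def H (i : Fin d) (n : ℕ) : ℝ := S.A (S.ν n i)

lemma ev_n0_floor : ∀ᶠ n : ℕ in atTop, S.n₀ ≤ ⌊S.Δ * (n:ℝ)⌋₊ :=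
  (tendsto_nat_floor_atTop.comp
    (tendsto_natCast_atTop_atTop.const_mul_atTop S.hΔpos)).eventually_ge_atTop S.n₀

lemma ev_nu_alpha : ∀ᶠ k : ℕ in atTop, ∀ i, S.α (S.ν k i) ≤ S.B * S.α k := by
  filter_upwards [S.ev_floor, S.ev_n0_floor] with k hk hk0 i
  calc S.α (S.ν k i) ≤ S.α ⌊S.Δ * (k:ℝ)⌋₊ := S.hαanti hk0 (hk i)
    _ ≤ S.B * S.α k := S.hB k

lemma ev_g_lower : ∀ᶠ k : ℕ in atTop, S.α (k+1) ≤ ∑ i ∈ S.Y k, S.α (S.ν k i) := by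
  filter_upwards [S.ev_floor, S.ev_n0_floor] with k hk hk0
  obtain ⟨i₀, hi₀⟩ := S.hYne k
  have h1 : S.α (k+1) ≤ S.α (S.ν k i₀) :=
    S.hαanti (hk0.trans (hk i₀)) (S.ν_le k i₀)
  exact h1.trans (Finset.single_le_sum (fun i _ => (S.hαpos _).le) hi₀)

lemma sum_inc (i : Fin d) (n : ℕ) : ∀ m, n ≤ m →
    ∑ k ∈ Finset.Ioc n m, (if i ∈ S.Y k then S.α (S.ν k i) else 0)
      = ∑ k ∈ Finset.Ioc (S.ν n i) (S.ν m i), S.α k := by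
  intro m
  induction m with
  | zero => intro h; interval_cases n; simp
  | succ m ih =>
    intro h
    rcases Nat.lt_or_ge n (m+1) with h' | h'
    · have hnm : n ≤ m := by omega
      rw [Finset.sum_Ioc_succ_top hnm, ih hnm, S.ν_succ m i]
      split
      · rw [Finset.sum_Ioc_succ_top (S.ν_mono' i hnm)]
      · simp
    · have : n = m + 1 := by omega
      subst this; simp
  
lemma H_sub (i : Fin d) {n m : ℕ} (h : n ≤ m) :
    S.H i m - S.H i n
      = ∑ k ∈ Finset.Ioc n m, (if i ∈ S.Y k then S.α (S.ν k i) else 0) := by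
  rw [S.sum_inc i n m h]
  exact S.A_sub _ _ (S.ν_mono' i h)

lemma H_sub_nonneg (i : Fin d) {n m : ℕ} (h : n ≤ m) : 0 ≤ S.H i m - S.H i n := by
  rw [H, H, S.A_sub _ _ (S.ν_mono' i h)]
  exact S.Ioc_sum_nonneg _ _

lemma tendsto_A_floor :
    Tendsto (fun n : ℕ => S.A ⌊S.Δ * (n:ℝ)⌋₊ / S.A n) atTop (nhds 1) := by
  rw [Metric.tendsto_atTop]
  intro ε hε
  obtain ⟨n₁, hn₁⟩ := eventually_atTop.1 (S.hAsum (ε/2) (half_pos hε))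
  exact ⟨n₁, fun n hn => by
    rw [Real.dist_eq]
    exact lt_of_le_of_lt (hn₁ n hn) (half_lt_self hε)⟩

lemma tendsto_A_succ : Tendsto (fun n : ℕ => S.A (n+1) / S.A n) atTop (nhds 1) := by
  have h0 : Tendsto (fun n : ℕ => S.α (n+1) / S.A n) atTop (nhds 0) :=
    Tendsto.div_atTop (S.hα0.comp (tendsto_add_atTop_nat 1)) S.A_tendsto
  have h1 : Tendsto (fun n : ℕ => 1 + S.α (n+1) / S.A n) atTop (nhds 1) := by
    simpa using tendsto_const_nhds.add h0
  refine h1.congr (fun n => ?_)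
  have hA : S.A (n+1) = S.A n + S.α (n+1) := Finset.sum_range_succ _ _
  rw [hA, add_div, div_self (S.A_pos n).ne']

lemma H_div_A (i : Fin d) : Tendsto (fun n => S.H i n / S.A n) atTop (nhds 1) := by
  refine tendsto_of_tendsto_of_tendsto_of_le_of_le' S.tendsto_A_floor S.tendsto_A_succ ?_ ?_
  · filter_upwards [S.ev_floor] with n hn
    exact (div_le_div_iff_of_pos_right (S.A_pos n)).2 (S.A_mono (hn i))
  · filter_upwards with n
    exact (div_le_div_iff_of_pos_right (S.A_pos n)).2 (S.A_mono (S.ν_le n i))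

/-- accumulated stepsizes for component `i` between times `n` and `m`. -/
def sTo (i : Fin d) (n m : ℕ) : ℝ := ∑ k ∈ Finset.Icc (S.ν n i) (S.ν m i), S.α k

/-- accumulated stepsizes for component `i` between `n` and `N n q`. -/
def s (q : ℝ) (i : Fin d) (n : ℕ) : ℝ := S.sTo i n (S.N n q)

lemma sTo_eq (i : Fin d) {n m : ℕ} (h : n ≤ m) :
    S.sTo i n m = S.α (S.ν n i) + (S.H i m - S.H i n) := by
  rw [sTo, Finset.Icc_eq_cons_Ioc (S.ν_mono' i h), Finset.sum_cons, H, H,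
    S.A_sub _ _ (S.ν_mono' i h)]

lemma sTo_pos (i : Fin d) {n m : ℕ} (h : n ≤ m) : 0 < S.sTo i n m := by
  rw [S.sTo_eq i h]
  have := S.hαpos (S.ν n i)
  have := S.H_sub_nonneg i h
  linarith

lemma sTo_mono (i : Fin d) (n : ℕ) {m m' : ℕ} (h : m ≤ m') : S.sTo i n m ≤ S.sTo i n m' :=
  Finset.sum_le_sum_of_subset_of_nonneg
    (Finset.Icc_subset_Icc_right (S.ν_mono' i h)) (fun k _ _ => (S.hαpos k).le)

lemma s_pos (q : ℝ) (i : Fin d) (n : ℕ) : 0 < S.s q i n :=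
  S.sTo_pos i (S.N_gt n q).le

lemma s_eq (q : ℝ) (i : Fin d) (n : ℕ) :
    S.s q i n = S.α (S.ν n i) + (S.H i (S.N n q) - S.H i n) :=
  S.sTo_eq i (S.N_gt n q).le

lemma s_mono_q {q q' : ℝ} (h : q ≤ q') (i : Fin d) (n : ℕ) : S.s q i n ≤ S.s q' i n :=
  S.sTo_mono i n (S.N_mono_q n h)


section Telescope

lemma ratio_le (q : ℝ) (hq : 0 < q) (i j : Fin d) (lam : ℝ)
    (h : ∀ᶠ n in atTop, lam * S.s q j n ≤ S.s q i n) : lam ≤ 1 := by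
  by_contra hcon
  push_neg at hcon
  have hlam : (0:ℝ) < lam := by linarith
  have hsmall : ∀ᶠ n : ℕ in atTop, S.α n ≤ q / 2 :=
    S.hα0.eventually (eventually_le_nhds (by linarith))
  obtain ⟨M, hM⟩ := eventually_atTop.1 (h.and hsmall)
  obtain ⟨e, he0, hes⟩ : ∃ e : ℕ → ℕ, e 0 = M ∧ ∀ t, e (t+1) = S.N (e t) q :=
    ⟨fun t => Nat.rec M (fun _ n => S.N n q) t, rfl, fun _ => rfl⟩
  have heM : ∀ t, M ≤ e t := by
    intro t
    induction t with
    | zero => exact he0.ge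
    | succ t ih => rw [hes t]; exact ih.trans (S.N_gt (e t) q).le
  have he_tendsto : Tendsto e atTop atTop := by
    have h1 : ∀ t, M + t ≤ e t := by
      intro t
      induction t with
      | zero => simp [he0]
      | succ t ih => rw [hes t]; have := S.N_gt (e t) q; omega
    exact tendsto_atTop_mono (fun t => le_trans (Nat.le_add_left t M) (h1 t)) tendsto_id
  have hsum : ∀ (i' : Fin d) (T : ℕ),
      ∑ t ∈ Finset.range T, S.s q i' (e t)
        = (S.H i' (e T) - S.H i' M) + ∑ t ∈ Finset.range T, S.α (S.ν (e t) i') := by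
    intro i' T
    have h1 : ∀ t, S.s q i' (e t)
        = (S.H i' (e (t+1)) - S.H i' (e t)) + S.α (S.ν (e t) i') := by
      intro t
      rw [hes t, S.s_eq]
      ring
    rw [Finset.sum_congr rfl (fun t _ => h1 t), Finset.sum_add_distrib,
      Finset.sum_range_sub (fun t => S.H i' (e t)), he0]
  have hΦ : ∀ T : ℕ, S.A M + (q/2) * T ≤ S.A (e T) := by
    intro T
    induction T with
    | zero => rw [he0]; simp
    | succ T ih =>
      have h2 : S.A (e (T+1)) - S.A (e T) = ∑ k ∈ Finset.Ioc (e T) (e (T+1)), S.α k := by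
        rw [S.A_sub _ _ ?_]
        rw [hes T]; exact (S.N_gt (e T) q).le
      have h3 : q ≤ S.SM (e T) (e (T+1)) := by rw [hes T]; exact S.N_ge (e T) q
      have h4 : S.SM (e T) (e (T+1)) = S.α (e T) + (S.A (e (T+1)) - S.A (e T)) := by
        apply S.SM_eq
        rw [hes T]; exact (S.N_gt (e T) q).le
      have h5 : S.α (e T) ≤ q / 2 := (hM (e T) (heM T)).2
      push_cast [Nat.cast_succ]
      nlinarith
  have hApos : ∀ T : ℕ, 0 < S.A (e T) := fun T => S.A_pos _
  have hE : ∀ i' : Fin d, Tendsto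
      (fun T => (∑ t ∈ Finset.range T, S.α (S.ν (e t) i')) / S.A (e T)) atTop (nhds 0) := by
    intro i'
    have hces : Tendsto (fun T : ℕ => (T:ℝ)⁻¹ * ∑ t ∈ Finset.range T, S.α (S.ν (e t) i'))
        atTop (nhds 0) := by
      apply Filter.Tendsto.cesaro
      exact S.hα0.comp ((S.ν_tendsto i').comp he_tendsto)
    have hub : Tendsto (fun T : ℕ => ((T:ℝ)⁻¹ * ∑ t ∈ Finset.range T, S.α (S.ν (e t) i')) * (2/q))
        atTop (nhds 0) := by simpa using hces.mul_const (2/q)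
    apply squeeze_zero' ?_ ?_ hub
    · filter_upwards with T
      exact div_nonneg (Finset.sum_nonneg fun t _ => (S.hαpos _).le) (hApos T).le
    · filter_upwards [eventually_ge_atTop 1] with T hT
      have hT0 : (0:ℝ) < (T:ℝ) := by exact_mod_cast (by omega : 0 < T)
      have hq2T : (0:ℝ) < q/2 * T := by positivity
      have hΦT : q/2 * T ≤ S.A (e T) := by
        have := S.A_pos M
        linarith [hΦ T]
      have hEnn : (0:ℝ) ≤ ∑ t ∈ Finset.range T, S.α (S.ν (e t) i') :=
        Finset.sum_nonneg fun t _ => (S.hαpos _).le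
      calc (∑ t ∈ Finset.range T, S.α (S.ν (e t) i')) / S.A (e T)
          ≤ (∑ t ∈ Finset.range T, S.α (S.ν (e t) i')) / (q/2 * T) :=
            div_le_div_of_nonneg_left hEnn hq2T hΦT
        _ = ((T:ℝ)⁻¹ * ∑ t ∈ Finset.range T, S.α (S.ν (e t) i')) * (2/q) := by
            have hTne : (T:ℝ) ≠ 0 := ne_of_gt hT0
            have hqne : q ≠ 0 := ne_of_gt hq
            field_simp
            try ring
            try exact Or.inl trivial
  have hu : ∀ i' : Fin d, Tendsto
      (fun T => ((S.H i' (e T) - S.H i' M) + ∑ t ∈ Finset.range T, S.α (S.ν (e t) i')) / S.A (e T))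
      atTop (nhds 1) := by
    intro i'
    have h1 : Tendsto (fun T => S.H i' (e T) / S.A (e T)) atTop (nhds 1) :=
      (S.H_div_A i').comp he_tendsto
    have h2 : Tendsto (fun T => S.H i' M / S.A (e T)) atTop (nhds 0) :=
      Tendsto.div_atTop tendsto_const_nhds (S.A_tendsto.comp he_tendsto)
    have h3 := (h1.sub h2).add (hE i')
    have h4 : (1:ℝ) - 0 + 0 = 1 := by ring
    rw [h4] at h3
    refine h3.congr (fun T => ?_)
    ring
  have hkey : ∀ T : ℕ, lam * (((S.H j (e T) - S.H j M) + ∑ t ∈ Finset.range T, S.α (S.ν (e t) j)) / S.A (e T))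
      ≤ ((S.H i (e T) - S.H i M) + ∑ t ∈ Finset.range T, S.α (S.ν (e t) i)) / S.A (e T) := by
    intro T
    have h1 : ∑ t ∈ Finset.range T, lam * S.s q j (e t) ≤ ∑ t ∈ Finset.range T, S.s q i (e t) :=
      Finset.sum_le_sum (fun t _ => (hM (e t) (heM t)).1)
    rw [← Finset.mul_sum, hsum i, hsum j] at h1
    rw [mul_div_assoc'] 
    exact (div_le_div_iff_of_pos_right (hApos T)).2 h1
  have hfin : lam * 1 ≤ (1:ℝ) :=
    le_of_tendsto_of_tendsto' ((hu j).const_mul lam) (hu i) hkey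
  linarith

lemma tendsto_one (q : ℝ) (hq : 0 < q) (i j : Fin d) (l : ℝ)
    (hl : Tendsto (fun n => S.s q i n / S.s q j n) atTop (nhds l)) :
    Tendsto (fun n => S.s q i n / S.s q j n) atTop (nhds 1) := by
  have hl0 : 0 ≤ l :=
    ge_of_tendsto hl (Eventually.of_forall fun n =>
      div_nonneg (S.s_pos q i n).le (S.s_pos q j n).le)
  rcases lt_trichotomy l 1 with hc | hc | hc
  · exfalso
    set lam : ℝ := (1 + l)/2 with hlamdef
    have hlam1 : l < lam := by rw [hlamdef]; linarith
    have hlam2 : lam < 1 := by rw [hlamdef]; linarith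
    have hlam0 : 0 < lam := by rw [hlamdef]; linarith
    have hev : ∀ᶠ n in atTop, S.s q i n / S.s q j n ≤ lam :=
      hl.eventually (eventually_le_nhds hlam1)
    have hev' : ∀ᶠ n in atTop, (1/lam) * S.s q i n ≤ S.s q j n := by
      filter_upwards [hev] with n hn
      rw [div_le_iff₀ (S.s_pos q j n)] at hn
      rw [one_div, inv_mul_le_iff₀ hlam0]
      linarith
    have := S.ratio_le q hq j i (1/lam) hev'
    have : (1:ℝ) ≤ lam := by
      rw [div_le_one hlam0] at this
      linarith
    linarith
  · rwa [hc] at hl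
  · exfalso
    set lam : ℝ := (1 + l)/2 with hlamdef
    have hlam1 : lam < l := by rw [hlamdef]; linarith
    have hlam2 : 1 < lam := by rw [hlamdef]; linarith
    have hev : ∀ᶠ n in atTop, lam * S.s q j n ≤ S.s q i n := by
      filter_upwards [hl.eventually (eventually_ge_nhds hlam1)] with n hn
      rw [le_div_iff₀ (S.s_pos q j n)] at hn
      linarith
    have := S.ratio_le q hq i j lam hev
    linarith

end Telescope


section Lower

/-- reindexing: `Σ_{k∈Ioc a b} f (k+1) = Σ_{k∈Ioc (a+1) (b+1)} f k`. -/
lemma sum_Ioc_shift (f : ℕ → ℝ) (a b : ℕ) :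
    ∑ k ∈ Finset.Ioc a b, f (k+1) = ∑ k ∈ Finset.Ioc (a+1) (b+1), f k := by
  rw [← Finset.map_add_right_Ioc, Finset.sum_map]
  rfl

lemma sum_Icc_shift (f : ℕ → ℝ) (a b : ℕ) :
    ∑ k ∈ Finset.Icc a b, f (k+1) = ∑ k ∈ Finset.Icc (a+1) (b+1), f k := by
  rw [← Finset.map_add_right_Icc, Finset.sum_map]
  rfl

/-- total update mass over `(n,m]` dominates `Σ_{Ioc n m} α (k+1)` eventually. -/
lemma sum_g_lower : ∀ᶠ M : ℕ in atTop, ∀ n m : ℕ, M ≤ n → n ≤ m →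
    ∑ k ∈ Finset.Ioc n m, S.α (k+1) ≤ ∑ k ∈ Finset.Ioc n m, ∑ i ∈ S.Y k, S.α (S.ν k i) := by
  obtain ⟨M₀, hM₀⟩ := eventually_atTop.1 S.ev_g_lower
  filter_upwards [eventually_ge_atTop M₀] with M hM n m hn _
  exact Finset.sum_le_sum fun k hk => hM₀ k (by
    have := (Finset.mem_Ioc.1 hk).1; omega)

lemma s_lower (q : ℝ) (hq : 0 < q) (j : Fin d)
    (h1 : ∀ i' : Fin d, Tendsto (fun n => S.s q i' n / S.s q j n) atTop (nhds 1)) :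
    ∀ᶠ n in atTop, q/(4*d) ≤ S.s q j n := by
  have hev2 : ∀ᶠ n in atTop, ∀ i' : Fin d, S.s q i' n ≤ 2 * S.s q j n := by
    rw [Filter.eventually_all]
    intro i'
    filter_upwards [(h1 i').eventually (eventually_le_nhds one_lt_two)] with n hn
    rw [div_le_iff₀ (S.s_pos q j n)] at hn
    linarith
  have hev3 : ∀ᶠ n in atTop, q/2 ≤ ∑ i' : Fin d, S.s q i' n := by
    obtain ⟨M₀, hM₀⟩ := eventually_atTop.1 S.ev_g_lower
    have hsm : ∀ᶠ n : ℕ in atTop, S.α n ≤ q/4 :=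
      S.hα0.eventually (eventually_le_nhds (by linarith))
    obtain ⟨M₁, hM₁⟩ := eventually_atTop.1 hsm
    filter_upwards [eventually_ge_atTop (max M₀ M₁)] with n hn
    set m := S.N n q with hm
    have hnm : n < m := S.N_gt n q
    have e1 : ∀ i' : Fin d, S.H i' m - S.H i' n ≤ S.s q i' n := by
      intro i'
      rw [S.s_eq]
      have := S.hαpos (S.ν n i')
      linarith
    have e2 : ∑ i' : Fin d, (S.H i' m - S.H i' n)
        = ∑ k ∈ Finset.Ioc n m, ∑ i' ∈ S.Y k, S.α (S.ν k i') := by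
      rw [Finset.sum_congr rfl (fun i' _ => S.H_sub i' hnm.le), Finset.sum_comm]
      refine Finset.sum_congr rfl (fun k _ => ?_)
      rw [Finset.sum_ite_mem, Finset.univ_inter]
    have e3 : ∑ k ∈ Finset.Ioc n m, S.α (k+1)
        ≤ ∑ k ∈ Finset.Ioc n m, ∑ i' ∈ S.Y k, S.α (S.ν k i') :=
      Finset.sum_le_sum fun k hk => hM₀ k (by
        have := (Finset.mem_Ioc.1 hk).1
        have := le_trans (le_max_left M₀ M₁) hn
        omega)
    have e4 : ∑ k ∈ Finset.Ioc n m, S.α k - S.α (n+1) ≤ ∑ k ∈ Finset.Ioc n m, S.α (k+1) := by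
      rw [sum_Ioc_shift]
      have s1 : ∑ k ∈ Finset.Ioc n (m+1), S.α k
          = S.α (n+1) + ∑ k ∈ Finset.Ioc (n+1) (m+1), S.α k := by
        rw [← Finset.Icc_add_one_left_eq_Ioc, Finset.Icc_eq_cons_Ioc (by omega), Finset.sum_cons]
      have s2 : ∑ k ∈ Finset.Ioc n (m+1), S.α k
          = ∑ k ∈ Finset.Ioc n m, S.α k + S.α (m+1) := Finset.sum_Ioc_succ_top hnm.le _
      have := S.hαpos (m+1)
      linarith
    have e5 : q - S.α n ≤ ∑ k ∈ Finset.Ioc n m, S.α k := by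
      have h1 := S.N_ge n q
      rw [S.SM_eq n m hnm.le, S.A_sub n m hnm.le] at h1
      linarith
    have e6 : S.α n ≤ q/4 := hM₁ n (le_trans (le_max_right M₀ M₁) hn)
    have e7 : S.α (n+1) ≤ q/4 := hM₁ (n+1) (by
      have := le_trans (le_max_right M₀ M₁) hn; omega)
    calc q/2 ≤ (q - S.α n) - S.α (n+1) := by linarith
      _ ≤ ∑ k ∈ Finset.Ioc n m, ∑ i' ∈ S.Y k, S.α (S.ν k i') := by linarith
      _ = ∑ i' : Fin d, (S.H i' m - S.H i' n) := e2.symm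
      _ ≤ ∑ i' : Fin d, S.s q i' n := Finset.sum_le_sum fun i' _ => e1 i'
  filter_upwards [hev2, hev3] with n h2 h3
  have h4 : ∑ i' : Fin d, S.s q i' n ≤ ∑ _i' : Fin d, 2 * S.s q j n :=
    Finset.sum_le_sum fun i' _ => h2 i'
  rw [Finset.sum_const, Finset.card_univ, Fintype.card_fin, nsmul_eq_mul] at h4
  have hd0 : (0:ℝ) < d := by exact_mod_cast j.pos
  rw [div_le_iff₀ (by positivity)]
  nlinarith [S.s_pos q j n]

end Lower

section Sandwich

lemma sandwich (hd : 1 ≤ d) (z : ℝ) (hz : 0 < z) (Nt : ℕ → ℕ)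
    (hNt : ∀ n, Nt n = sInf {m | n < m ∧
      z ≤ ∑ k ∈ Finset.Icc n m, ∑ i ∈ S.Y k, S.α (S.ν k i)}) :
    ∀ᶠ n in atTop, S.N n (z/(d*S.B)) ≤ Nt n ∧ Nt n ≤ S.N n (2*z) ∧ n < Nt n := by
  obtain ⟨M₀, hM₀⟩ := eventually_atTop.1 S.ev_g_lower
  obtain ⟨M₁, hM₁⟩ := eventually_atTop.1 S.ev_nu_alpha
  have hsm : ∀ᶠ n : ℕ in atTop, S.α n ≤ z :=
    S.hα0.eventually (eventually_le_nhds hz)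
  obtain ⟨M₂, hM₂⟩ := eventually_atTop.1 hsm
  filter_upwards [eventually_ge_atTop (max M₀ (max M₁ M₂))] with n hn
  have hnM₀ : M₀ ≤ n := le_trans (le_max_left _ _) hn
  have hnM₁ : M₁ ≤ n := le_trans ((le_max_left _ _).trans (le_max_right _ _)) hn
  have hnM₂ : M₂ ≤ n := le_trans ((le_max_right _ _).trans (le_max_right _ _)) hn
  set m₂ := S.N n (2*z) with hm₂
  have hnm₂ : n < m₂ := S.N_gt n (2*z)
  -- upper bound: m₂ belongs to the defining set of Nt n
  have hub : z ≤ ∑ k ∈ Finset.Icc n m₂, ∑ i ∈ S.Y k, S.α (S.ν k i) := by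
    have e1 : ∑ k ∈ Finset.Icc n m₂, S.α (k+1)
        ≤ ∑ k ∈ Finset.Icc n m₂, ∑ i ∈ S.Y k, S.α (S.ν k i) :=
      Finset.sum_le_sum fun k hk => hM₀ k (by
        have := (Finset.mem_Icc.1 hk).1; omega)
    have e2 : ∑ k ∈ Finset.Icc n m₂, S.α (k+1)
        = ∑ k ∈ Finset.Icc (n+1) (m₂+1), S.α k := sum_Icc_shift _ _ _
    have e3 : ∑ k ∈ Finset.Icc n (m₂+1), S.α k
        = S.α n + ∑ k ∈ Finset.Icc (n+1) (m₂+1), S.α k := by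
      rw [Finset.Icc_eq_cons_Ioc (by omega), Finset.sum_cons, Finset.Icc_add_one_left_eq_Ioc]
    have e4 : ∑ k ∈ Finset.Icc n (m₂+1), S.α k
        = ∑ k ∈ Finset.Icc n m₂, S.α k + S.α (m₂+1) :=
      Finset.sum_Icc_succ_top (by omega) _
    have e5 : 2*z ≤ ∑ k ∈ Finset.Icc n m₂, S.α k := S.N_ge n (2*z)
    have e6 : S.α n ≤ z := hM₂ n hnM₂
    have := S.hαpos (m₂+1)
    linarith
  have hNtle : Nt n ≤ m₂ := by
    rw [hNt]
    exact Nat.sInf_le ⟨hnm₂, hub⟩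
  have hne : {m | n < m ∧ z ≤ ∑ k ∈ Finset.Icc n m, ∑ i ∈ S.Y k, S.α (S.ν k i)}.Nonempty :=
    ⟨m₂, hnm₂, hub⟩
  have hNtmem : n < Nt n ∧
      z ≤ ∑ k ∈ Finset.Icc n (Nt n), ∑ i ∈ S.Y k, S.α (S.ν k i) := by
    rw [hNt]
    exact Nat.sInf_mem hne
  refine ⟨?_, hNtle, hNtmem.1⟩
  -- lower bound
  have hdB : (0:ℝ) < d * S.B := by
    have hd1 : (1:ℝ) ≤ d := by exact_mod_cast hd
    nlinarith [S.hB1]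
  have hkey : ∑ k ∈ Finset.Icc n (Nt n), ∑ i ∈ S.Y k, S.α (S.ν k i)
      ≤ (d * S.B) * ∑ k ∈ Finset.Icc n (Nt n), S.α k := by
    rw [Finset.mul_sum]
    refine Finset.sum_le_sum fun k hk => ?_
    have hkM₁ : M₁ ≤ k := by
      have := (Finset.mem_Icc.1 hk).1; omega
    calc ∑ i ∈ S.Y k, S.α (S.ν k i) ≤ ∑ _i ∈ S.Y k, S.B * S.α k :=
          Finset.sum_le_sum fun i _ => hM₁ k hkM₁ i
      _ = (S.Y k).card * (S.B * S.α k) := by rw [Finset.sum_const, nsmul_eq_mul]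
      _ ≤ d * (S.B * S.α k) := by
          have hc : ((S.Y k).card : ℝ) ≤ d := by
            exact_mod_cast (Finset.card_le_univ _).trans (by simp)
          have hpos : 0 ≤ S.B * S.α k := by
            nlinarith [S.hαpos k, S.hB1]
          nlinarith
      _ = d * S.B * S.α k := by ring
  have hfin : z / (d * S.B) ≤ ∑ k ∈ Finset.Icc n (Nt n), S.α k := by
    rw [div_le_iff₀ hdB]
    nlinarith [hNtmem.2]
  exact S.N_le_of n (Nt n) _ hNtmem.1 hfin

lemma s_incr {q q' : ℝ} (hq : 0 < q) (hqq' : q ≤ q') (i : Fin d) :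
    ∀ᶠ n in atTop, S.s q' i n ≤ S.s q i n + S.B * ((q' - q) + S.α n) := by
  obtain ⟨M₁, hM₁⟩ := eventually_atTop.1 S.ev_nu_alpha
  have hsm : ∀ᶠ n : ℕ in atTop, S.α n ≤ q/4 :=
    S.hα0.eventually (eventually_le_nhds (by linarith))
  obtain ⟨M₂, hM₂⟩ := eventually_atTop.1 hsm
  filter_upwards [eventually_ge_atTop (max S.n₀ (max M₁ M₂))] with n hn
  have hn₀ : S.n₀ ≤ n := le_trans (le_max_left _ _) hn
  have hnM₁ : M₁ ≤ n := le_trans ((le_max_left _ _).trans (le_max_right _ _)) hn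
  have hnM₂ : M₂ ≤ n := le_trans ((le_max_right _ _).trans (le_max_right _ _)) hn
  set m := S.N n q with hm
  set m' := S.N n q' with hm'
  have hnm : n < m := S.N_gt n q
  have hmm' : m ≤ m' := S.N_mono_q n hqq'
  -- bound the difference
  have h1 : S.s q' i n - S.s q i n = S.H i m' - S.H i m := by
    rw [S.s_eq, S.s_eq]
    ring
  have h2 : S.H i m' - S.H i m
      = ∑ k ∈ Finset.Ioc m m', (if i ∈ S.Y k then S.α (S.ν k i) else 0) :=
    S.H_sub i hmm'
  have h3 : ∑ k ∈ Finset.Ioc m m', (if i ∈ S.Y k then S.α (S.ν k i) else 0)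
      ≤ ∑ k ∈ Finset.Ioc m m', S.B * S.α k := by
    refine Finset.sum_le_sum fun k hk => ?_
    have hkM₁ : M₁ ≤ k := by
      have := (Finset.mem_Ioc.1 hk).1; omega
    split
    · exact hM₁ k hkM₁ i
    · nlinarith [S.hαpos k, S.hB1]
  have h4 : ∑ k ∈ Finset.Ioc m m', S.B * S.α k
      = S.B * (∑ k ∈ Finset.Ioc n m', S.α k - ∑ k ∈ Finset.Ioc n m, S.α k) := by
    rw [← Finset.mul_sum]
    congr 1
    have hc := Finset.sum_Ioc_consecutive (fun k => S.α k) hnm.le hmm'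
    linarith
  have h5 : q - S.α n ≤ ∑ k ∈ Finset.Ioc n m, S.α k := by
    have h5a := S.N_ge n q
    rw [S.SM_eq n m hnm.le, S.A_sub n m hnm.le] at h5a
    linarith
  have hm'2 : n + 2 ≤ m' := by
    by_contra hcon
    have hm'1 : m' = n + 1 := by
      have := S.N_gt n q'
      omega
    have h6a : q' ≤ S.SM n m' := S.N_ge n q'
    rw [hm'1] at h6a
    have h6b : S.SM n (n+1) = S.α n + S.α (n+1) := by
      rw [SM, Finset.sum_Icc_succ_top (by omega), Finset.Icc_self, Finset.sum_singleton]
    have e6 : S.α n ≤ q/4 := hM₂ n hnM₂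
    have e7 : S.α (n+1) ≤ q/4 := hM₂ (n+1) (by omega)
    rw [h6b] at h6a
    linarith
  have h6 : ∑ k ∈ Finset.Ioc n m', S.α k ≤ (q' - S.α n) + S.α n := by
    obtain ⟨a, ha⟩ : ∃ a, m' = a + 1 := ⟨m'-1, by omega⟩
    have hmin : S.SM n a < q' := S.N_min n a q' (by omega) (by omega)
    have hsplit : S.SM n m' = S.SM n a + S.α m' := by
      rw [SM, SM, ha, Finset.sum_Icc_succ_top (by omega)]
    have hαm' : S.α m' ≤ S.α n := S.hαanti hn₀ (by omega)
    have h6a : S.SM n m' = S.α n + ∑ k ∈ Finset.Ioc n m', S.α k := by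
      rw [S.SM_eq n m' (by omega), S.A_sub n m' (by omega)]
    linarith
  have hBpos : (0:ℝ) < S.B := by linarith [S.hB1]
  have h7 : ∑ k ∈ Finset.Ioc n m', S.α k - ∑ k ∈ Finset.Ioc n m, S.α k
      ≤ (q' - q) + S.α n := by linarith
  have h8 : S.B * (∑ k ∈ Finset.Ioc n m', S.α k - ∑ k ∈ Finset.Ioc n m, S.α k)
      ≤ S.B * ((q' - q) + S.α n) := mul_le_mul_of_nonneg_left h7 hBpos.le
  linarith

end Sandwich


section Main

theorem main (hd : 1 ≤ d) (z : ℝ) (hz : 0 < z) (Nt : ℕ → ℕ)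
    (hNt : ∀ n, Nt n = sInf {m | n < m ∧
      z ≤ ∑ k ∈ Finset.Icc n m, ∑ i ∈ S.Y k, S.α (S.ν k i)})
    (hlim : ∀ (m t : ℕ) (i j : Fin d), ∃ l : ℝ, Tendsto
      (fun n => S.s (z/(d*S.B) + t * ((2*z - z/(d*S.B))/2^m)) i n
              / S.s (z/(d*S.B) + t * ((2*z - z/(d*S.B))/2^m)) j n) atTop (nhds l))
    (i j : Fin d) :
    Tendsto (fun n => S.sTo i n (Nt n) / S.sTo j n (Nt n)) atTop (nhds 1) := by
  have hd1 : (1:ℝ) ≤ d := by exact_mod_cast hd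
  have hBpos : (0:ℝ) < S.B := by linarith [S.hB1]
  have hdB : (1:ℝ) ≤ d * S.B := by nlinarith [S.hB1]
  set x₁ : ℝ := z/(d*S.B) with hx₁def
  set x₂ : ℝ := 2*z with hx₂def
  have hx₁ : 0 < x₁ := div_pos hz (by linarith)
  have hx12 : x₁ ≤ x₂ := by
    have : x₁ ≤ z := div_le_self hz.le hdB
    linarith
  have hsub : (0:ℝ) ≤ x₂ - x₁ := by linarith
  have hone : ∀ (m t : ℕ) (i' j' : Fin d),
      Tendsto (fun n => S.s (x₁ + t * ((x₂ - x₁)/2^m)) i' n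
        / S.s (x₁ + t * ((x₂ - x₁)/2^m)) j' n) atTop (nhds 1) := by
    intro m t i' j'
    have hqpos : 0 < x₁ + t * ((x₂ - x₁)/2^m) := by
      have h1 : (0:ℝ) ≤ (t:ℝ) * ((x₂ - x₁)/2^m) := by positivity
      linarith
    obtain ⟨l, hl⟩ := hlim m t i' j'
    exact S.tendsto_one _ hqpos i' j' l hl
  rw [Metric.tendsto_atTop]
  intro ε hε
  set c : ℝ := x₁/(4*d) with hcdef
  have hc : 0 < c := by positivity
  have hw : (0:ℝ) < c*ε/(16*S.B) := by positivity
  obtain ⟨mIdx, hmIdx⟩ : ∃ m : ℕ, (x₂ - x₁)/2^m ≤ c*ε/(16*S.B) := by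
    obtain ⟨m, hm⟩ := pow_unbounded_of_one_lt ((x₂ - x₁)/(c*ε/(16*S.B))) one_lt_two
    refine ⟨m, ?_⟩
    rw [div_le_iff₀ (by positivity)]
    rw [div_lt_iff₀ hw] at hm
    linarith
  set K : ℕ := 2^mIdx with hKdef
  have hK1 : 1 ≤ K := Nat.one_le_two_pow
  set δg : ℝ := (x₂ - x₁)/2^mIdx with hδgdef
  have hδgnn : 0 ≤ δg := by positivity
  set qg : ℕ → ℝ := fun t => x₁ + t * δg with hqgdef
  have hq0 : qg 0 = x₁ := by simp [hqgdef]
  have hqK : qg K = x₂ := by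
    have h2 : ((2:ℝ))^mIdx ≠ 0 := by positivity
    simp only [hqgdef, hδgdef, hKdef]
    push_cast
    field_simp
    ring
  have hqmono : ∀ {t t' : ℕ}, t ≤ t' → qg t ≤ qg t' := by
    intro t t' htt'
    simp only [hqgdef]
    have : (t:ℝ) ≤ (t':ℝ) := by exact_mod_cast htt'
    nlinarith
  have hqpos : ∀ t, 0 < qg t := by
    intro t
    have : x₁ = qg 0 := hq0.symm
    calc (0:ℝ) < x₁ := hx₁
      _ = qg 0 := hq0.symm
      _ ≤ qg t := hqmono (Nat.zero_le t)
  have hqx₂ : ∀ t, t ≤ K → qg t ≤ x₂ := fun t ht => hqK ▸ hqmono ht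
  have hqstep : ∀ t : ℕ, qg (t+1) - qg t = δg := by
    intro t
    simp only [hqgdef]
    push_cast
    ring
  -- eventual facts
  have Hev1 : ∀ᶠ n in atTop, ∀ t ∈ Finset.range (K+1),
      |S.s (qg t) i n / S.s (qg t) j n - 1| ≤ ε/4 := by
    rw [Finset.eventually_all]
    intro t _
    obtain ⟨Nn, hNn⟩ := Metric.tendsto_atTop.1 (hone mIdx t i j) (ε/4) (by positivity)
    filter_upwards [eventually_ge_atTop Nn] with n hn
    have h := hNn n hn
    rw [Real.dist_eq] at h
    exact h.le
  have Hev2 : ∀ᶠ n in atTop, ∀ t ∈ Finset.range (K+1), c ≤ S.s (qg t) j n := by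
    rw [Finset.eventually_all]
    intro t _
    have hl := S.s_lower (qg t) (hqpos t) j (fun i' => hone mIdx t i' j)
    filter_upwards [hl] with n hn
    refine le_trans ?_ hn
    rw [hcdef]
    have h4d : (0:ℝ) < 4*d := by linarith
    have : x₁ ≤ qg t := hq0 ▸ hqmono (Nat.zero_le t)
    exact (div_le_div_iff_of_pos_right h4d).2 this
  have Hev3 : ∀ᶠ n in atTop, ∀ t ∈ Finset.range K,
      S.s (qg (t+1)) i n ≤ S.s (qg t) i n + S.B*(δg + S.α n)
        ∧ S.s (qg (t+1)) j n ≤ S.s (qg t) j n + S.B*(δg + S.α n) := by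
    rw [Finset.eventually_all]
    intro t _
    have hio := S.s_incr (hqpos t) (hqmono (Nat.le_succ t)) i
    have hjo := S.s_incr (hqpos t) (hqmono (Nat.le_succ t)) j
    filter_upwards [hio, hjo] with n hi' hj'
    rw [hqstep t] at hi' hj'
    exact ⟨hi', hj'⟩
  have Hev4 := S.sandwich hd z hz Nt hNt
  have Hev5 : ∀ᶠ n : ℕ in atTop, S.α n ≤ c*ε/(16*S.B) :=
    S.hα0.eventually (eventually_le_nhds hw)
  rw [eventually_atTop] at Hev1 Hev2 Hev3 Hev4 Hev5
  obtain ⟨N1, h1⟩ := Hev1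
  obtain ⟨N2, h2⟩ := Hev2
  obtain ⟨N3, h3⟩ := Hev3
  obtain ⟨N4, h4⟩ := Hev4
  obtain ⟨N5, h5⟩ := Hev5
  refine ⟨max N1 (max N2 (max N3 (max N4 N5))), fun n hn => ?_⟩
  have hn1 := h1 n (le_trans (le_max_left _ _) hn)
  have hn2 := h2 n (le_trans ((le_max_left _ _).trans (le_max_right _ _)) hn)
  have hn3 := h3 n (le_trans (((le_max_left _ _).trans (le_max_right _ _)).trans (le_max_right _ _)) hn)
  have hn4 := h4 n (le_trans ((((le_max_left _ _).trans (le_max_right _ _)).trans (le_max_right _ _)).trans (le_max_right _ _)) hn)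
  have hn5 := h5 n (le_trans ((((le_max_right _ _).trans (le_max_right _ _)).trans (le_max_right _ _)).trans (le_max_right _ _)) hn)
  obtain ⟨hlo4, hup4, hNtgt⟩ := hn4
  -- choose the grid cell containing Nt n
  have hP0 : S.N n (qg 0) ≤ Nt n := by rw [hq0]; exact hlo4
  set tstar : ℕ := Nat.findGreatest (fun t => S.N n (qg t) ≤ Nt n) K with htsdef
  have htstar : S.N n (qg tstar) ≤ Nt n :=
    Nat.findGreatest_spec (P := fun t => S.N n (qg t) ≤ Nt n) (Nat.zero_le K) hP0
  have htstarK : tstar ≤ K := Nat.findGreatest_le K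
  set t0 : ℕ := min tstar (K-1) with ht0def
  have ht0K : t0 + 1 ≤ K := by omega
  have hlo : S.N n (qg t0) ≤ Nt n :=
    le_trans (S.N_mono_q n (hqmono (min_le_left _ _))) htstar
  have hup : Nt n ≤ S.N n (qg (t0+1)) := by
    rcases Nat.lt_or_ge tstar K with hcase | hcase
    · have ht0 : t0 = tstar := by omega
      have hgr : ¬ (S.N n (qg (t0+1)) ≤ Nt n) :=
        Nat.findGreatest_is_greatest (P := fun t => S.N n (qg t) ≤ Nt n) (n := K)
          (k := t0 + 1) (by rw [← htsdef]; omega) (by omega)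
      omega
    · have hteq : tstar = K := by omega
      have ht0 : t0 + 1 = K := by omega
      rw [ht0, hqK]
      exact hup4
  -- key bounds
  set a : ℝ := S.s (qg t0) i n with hadef
  set b : ℝ := S.s (qg t0) j n with hbdef
  set u : ℝ := S.sTo i n (Nt n) with hudef
  set v : ℝ := S.sTo j n (Nt n) with hvdef
  set η : ℝ := S.B*(δg + S.α n) with hηdef
  have hbpos : 0 < b := S.s_pos (qg t0) j n
  have hvpos : 0 < v := S.sTo_pos j hNtgt.le
  have hη0 : 0 ≤ η := by
    have := S.hαpos n
    rw [hηdef]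
    positivity
  have hηle : η ≤ c*ε/8 := by
    have hδ1 : δg ≤ c*ε/(16*S.B) := hmIdx
    have hδ2 : S.α n ≤ c*ε/(16*S.B) := hn5
    have : η ≤ S.B * (2 * (c*ε/(16*S.B))) := by
      rw [hηdef]
      apply mul_le_mul_of_nonneg_left (by linarith) hBpos.le
    have heq : S.B * (2 * (c*ε/(16*S.B))) = c*ε/8 := by
      field_simp
      ring
    linarith
  have hau : a ≤ u := S.sTo_mono i n hlo
  have hbv : b ≤ v := S.sTo_mono j n hlo
  have hua : u ≤ a + η := by
    have h1' : u ≤ S.s (qg (t0+1)) i n := S.sTo_mono i n hup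
    have h2' := (hn3 t0 (Finset.mem_range.2 (by omega))).1
    linarith
  have hvb : v ≤ b + η := by
    have h1' : v ≤ S.s (qg (t0+1)) j n := S.sTo_mono j n hup
    have h2' := (hn3 t0 (Finset.mem_range.2 (by omega))).2
    linarith
  have hab : |a/b - 1| ≤ ε/4 := hn1 t0 (Finset.mem_range.2 (by omega))
  have hcb : c ≤ b := hn2 t0 (Finset.mem_range.2 (by omega))
  -- numeric conclusion
  have habs : |a - b| ≤ (ε/4)*b := by
    rw [div_sub_one hbpos.ne', abs_div, abs_of_pos hbpos, div_le_iff₀ hbpos] at hab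
    linarith
  have hηb : η ≤ (ε/8)*b := by
    have h8 : (0:ℝ) ≤ ε/8 := by linarith
    have hstep : c*ε/8 ≤ (ε/8)*b := by
      calc c*ε/8 = (ε/8)*c := by ring
        _ ≤ (ε/8)*b := mul_le_mul_of_nonneg_left hcb h8
    linarith
  have huv : |u - v| ≤ (3*ε/8)*b := by
    have l1 : u - v ≤ |a - b| + η := by linarith [le_abs_self (a-b)]
    have l2 : v - u ≤ |a - b| + η := by linarith [neg_abs_le (a-b)]
    rw [abs_le]
    constructor <;> linarith [abs_nonneg (a-b)]
  have hfin : |u/v - 1| ≤ 3*ε/8 := by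
    rw [div_sub_one hvpos.ne', abs_div, abs_of_pos hvpos, div_le_iff₀ hvpos]
    calc |u - v| ≤ (3*ε/8)*b := huv
      _ ≤ (3*ε/8)*v := mul_le_mul_of_nonneg_left hbv (by linarith)
  rw [Real.dist_eq]
  calc |u/v - 1| ≤ 3*ε/8 := hfin
    _ < ε := by linarith

end Main

end Setup
end AsyncSA

/-- **Lemma 3.** Under Assumptions 3 and 4, with
`Ñ(n,x) := min{m > n : Σ_{k=n}^m Σ_{i∈Y_k} α_{ν(k,i)} ≥ x}`, for each `x > 0`,
almost surely the component-wise accumulated stepsizes up to time `Ñ(n,x)` are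
asymptotically balanced: the ratios tend to `1` for all `i, j`. -/
theorem accumulated_stepsize_ratio_tendsto_one
    {d : ℕ} (hd : 1 ≤ d)
    {Ω : Type*} [m0 : MeasurableSpace Ω] (μ : Measure Ω) [IsProbabilityMeasure μ]
    (Y : ℕ → Ω → Finset (Fin d)) (hYne : ∀ n ω, (Y n ω).Nonempty)
    (ν : ℕ → Fin d → Ω → ℕ)
    (hν : ∀ n i ω, ν n i ω = ∑ k ∈ Finset.range (n + 1), if i ∈ Y k ω then 1 else 0)
    (α : ℕ → ℝ) (hαpos : ∀ n, 0 < α n)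
    -- Assumption 3(i)
    (hαdiv : ¬ Summable α) (hαsq : Summable fun n => (α n) ^ 2)
    (hαmono : ∃ n₀ : ℕ, ∀ n ≥ n₀, α (n + 1) ≤ α n)
    -- Assumption 3(ii)
    (hαratio : ∀ z : ℝ, 0 < z → z < 1 → ∃ B : ℝ, ∀ n : ℕ, α ⌊z * (n : ℝ)⌋₊ / α n ≤ B)
    -- Assumption 3(iii)
    (hαsum : ∀ z : ℝ, 0 < z → z < 1 → ∀ ε > (0 : ℝ), ∃ n₀ : ℕ, ∀ n ≥ n₀, ∀ y ∈ Set.Icc z 1,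
      |(∑ k ∈ Finset.range (⌊y * (n : ℝ)⌋₊ + 1), α k) / (∑ k ∈ Finset.range (n + 1), α k) - 1| ≤ ε)
    -- Assumption 4, with N(n,x) := min{m > n : Σ_{k=n}^m α_k ≥ x}
    (N : ℕ → ℝ → ℕ)
    (hN : ∀ n z, N n z = sInf {m | n < m ∧ z ≤ ∑ k ∈ Finset.Icc n m, α k})
    (Δ : ℝ) (hΔ : 0 < Δ)
    (hfreq : ∀ i, ∀ᵐ ω ∂μ, Δ ≤ Filter.liminf (fun n => (ν n i ω : ℝ) / (n : ℝ)) atTop)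
    (hratio : ∀ z : ℝ, 0 < z → ∀ i j : Fin d, ∀ᵐ ω ∂μ, ∃ ℓ : ℝ,
      Filter.Tendsto (fun n =>
        (∑ k ∈ Finset.Icc (ν n i ω) (ν (N n z) i ω), α k) /
        (∑ k ∈ Finset.Icc (ν n j ω) (ν (N n z) j ω), α k)) Filter.atTop (nhds ℓ))
    -- Ñ(n,x)
    (Ntil : ℕ → ℝ → Ω → ℕ)
    (hNtil : ∀ n z ω, Ntil n z ω =
      sInf {m | n < m ∧ z ≤ ∑ k ∈ Finset.Icc n m, ∑ i ∈ Y k ω, α (ν k i ω)}) :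
    ∀ z : ℝ, 0 < z → ∀ᵐ ω ∂μ, ∀ i j : Fin d,
      Tendsto (fun n =>
        (∑ k ∈ Finset.Icc (ν n i ω) (ν (Ntil n z ω) i ω), α k) /
        (∑ k ∈ Finset.Icc (ν n j ω) (ν (Ntil n z ω) j ω), α k)) atTop (nhds 1) := by
  intro z hz
  -- deterministic preliminaries
  have hα0 : Tendsto α atTop (nhds 0) := by
    have h2 : Tendsto (fun n => (α n)^2) atTop (nhds 0) := hαsq.tendsto_atTop_zero
    have h3 : Tendsto (fun n => Real.sqrt ((α n)^2)) atTop (nhds (Real.sqrt 0)) :=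
      (Real.continuous_sqrt.tendsto 0).comp h2
    rw [Real.sqrt_zero] at h3
    exact h3.congr fun n => Real.sqrt_sq (hαpos n).le
  have hAtop : Tendsto (fun n => ∑ k ∈ Finset.range n, α k) atTop atTop :=
    (not_summable_iff_tendsto_nat_atTop_of_nonneg (fun n => (hαpos n).le)).1 hαdiv
  obtain ⟨n₀, hmono⟩ := hαmono
  have hαanti : ∀ {a b : ℕ}, n₀ ≤ a → a ≤ b → α b ≤ α a := by
    intro a b ha hab
    induction b, hab using Nat.le_induction with
    | base => exact le_rfl
    | succ b hab ih => exact (hmono b (ha.trans hab)).trans ih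
  set Δ' : ℝ := min (Δ/2) 2⁻¹ with hΔ'def
  have hΔ'pos : 0 < Δ' := by
    rw [hΔ'def]
    exact lt_min (by linarith) (by norm_num)
  have hΔ'lt1 : Δ' < 1 := by
    rw [hΔ'def]
    calc min (Δ/2) 2⁻¹ ≤ 2⁻¹ := min_le_right _ _
      _ < 1 := by norm_num
  have hΔ'ltΔ : Δ' < Δ := by
    rw [hΔ'def]
    calc min (Δ/2) 2⁻¹ ≤ Δ/2 := min_le_left _ _
      _ < Δ := by linarith
  obtain ⟨B, hB⟩ := hαratio Δ' hΔ'pos hΔ'lt1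
  have hB' : ∀ n : ℕ, α ⌊Δ' * (n:ℝ)⌋₊ ≤ B * α n :=
    fun n => (div_le_iff₀ (hαpos n)).1 (hB n)
  have hB1 : 1 ≤ B := by
    have h0 := hB 0
    rw [Nat.cast_zero, mul_zero, Nat.floor_zero, div_self (hαpos 0).ne'] at h0
    exact h0
  have hAsum' : ∀ ε > (0:ℝ), ∀ᶠ n : ℕ in atTop,
      |(∑ k ∈ Finset.range (⌊Δ' * (n:ℝ)⌋₊ + 1), α k) / (∑ k ∈ Finset.range (n + 1), α k) - 1| ≤ ε := by
    intro ε hε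
    obtain ⟨n₁, hn₁⟩ := hαsum Δ' hΔ'pos hΔ'lt1 ε hε
    rw [eventually_atTop]
    exact ⟨n₁, fun n hn => hn₁ n hn Δ' ⟨le_rfl, hΔ'lt1.le⟩⟩
  -- a.e. facts
  have hae1 : ∀ᵐ ω ∂μ, ∀ i : Fin d,
      Δ ≤ Filter.liminf (fun n => (ν n i ω : ℝ) / (n : ℝ)) atTop := ae_all_iff.2 hfreq
  have hgqpos : ∀ (m t : ℕ), 0 < z/(d*B) + (t:ℝ) * ((2*z - z/(d*B))/2^m) := by
    intro m t
    have hd1 : (1:ℝ) ≤ d := by exact_mod_cast hd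
    have hdB : (1:ℝ) ≤ d * B := by nlinarith
    have hx₁ : 0 < z/(d*B) := div_pos hz (by linarith)
    have hx12 : z/(d*B) ≤ 2*z := by
      have : z/(d*B) ≤ z := div_le_self hz.le hdB
      linarith
    have h1 : (0:ℝ) ≤ (t:ℝ) * ((2*z - z/(d*B))/2^m) := by
      apply mul_nonneg (Nat.cast_nonneg t)
      apply div_nonneg (by linarith) (by positivity)
    linarith
  have hae2 : ∀ᵐ ω ∂μ, ∀ (m t : ℕ) (i j : Fin d), ∃ l : ℝ,
      Tendsto (fun n =>
        (∑ k ∈ Finset.Icc (ν n i ω) (ν (N n (z/(d*B) + (t:ℝ) * ((2*z - z/(d*B))/2^m))) i ω), α k) /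
        (∑ k ∈ Finset.Icc (ν n j ω) (ν (N n (z/(d*B) + (t:ℝ) * ((2*z - z/(d*B))/2^m))) j ω), α k))
        atTop (nhds l) :=
    ae_all_iff.2 fun m => ae_all_iff.2 fun t => ae_all_iff.2 fun i => ae_all_iff.2 fun j =>
      hratio _ (hgqpos m t) i j
  filter_upwards [hae1, hae2] with ω hω1 hω2
  -- build the setup for this ω
  have hfreqω : ∀ i : Fin d, ∀ᶠ n : ℕ in atTop, Δ' * (n:ℝ) ≤ (ν n i ω : ℝ) := by
    intro i
    have hbdd : Filter.IsBoundedUnder (· ≥ ·) atTop (fun n : ℕ => (ν n i ω : ℝ) / (n : ℝ)) :=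
      ⟨0, Filter.eventually_map.2 (Eventually.of_forall fun n => by positivity)⟩
    have hev := Filter.eventually_lt_of_lt_liminf (lt_of_lt_of_le hΔ'ltΔ (hω1 i)) hbdd
    filter_upwards [hev, eventually_ge_atTop 1] with n hn hn1
    have hn0 : (0:ℝ) < (n:ℝ) := by exact_mod_cast (by omega : 0 < n)
    rw [lt_div_iff₀ hn0] at hn
    linarith
  set S : AsyncSA.Setup d := {
    α := α
    Y := fun n => Y n ω
    ν := fun n i => ν n i ω
    N := N
    n₀ := n₀
    Δ := Δ'
    B := B
    hαpos := hαpos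
    hα0 := hα0
    hAtop := hAtop
    hαanti := fun ha hab => hαanti ha hab
    hΔpos := hΔ'pos
    hB := hB'
    hB1 := hB1
    hAsum := hAsum'
    hYne := fun n => hYne n ω
    hν := fun n i => hν n i ω
    hN := hN
    hfreq := hfreqω } with hSdef
  intro i j
  exact S.main hd z hz (fun n => Ntil n z ω) (fun n => hNtil n z ω)
    (fun m t i' j' => hω2 m t i' j') i j
end

section
/- Under Assumptions 3 and 4, for each x > 0 and all i, j ∈ I, the almost-sure limit lim_{n→∞} (Σ_{k=ν(n,i)}^{ν(N(n,x),i)} α_k)/(Σ_{k=ν(n,j)}^{ν(N(n,x),j)} α_k) appearing in Assumption 4(ii) equals 1 almost surely. -/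
open MeasureTheory Filter

private lemma my_alpha_antitone {α : ℕ → ℝ} {K : ℕ} (h : ∀ n ≥ K, α (n+1) ≤ α n) :
    ∀ p q, K ≤ p → p ≤ q → α q ≤ α p := by
  intro p q hK hpq
  induction q, hpq using Nat.le_induction with
  | base => exact le_refl _
  | succ n hn ih => exact le_trans (h n (le_trans hK hn)) ih

private lemma my_T_atTop {α : ℕ → ℝ} (hpos : ∀ n, 0 < α n) (hdiv : ¬ Summable α) :
    Tendsto (fun n => ∑ k ∈ Finset.range (n+1), α k) atTop atTop := by
  have h := (not_summable_iff_tendsto_nat_atTop_of_nonneg (fun n => (hpos n).le)).1 hdiv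
  exact h.comp (tendsto_add_atTop_nat 1)

private lemma my_alpha_zero {α : ℕ → ℝ} (hpos : ∀ n, 0 < α n)
    (hsq : Summable fun n => α n ^ 2) : Tendsto α atTop (nhds 0) := by
  have h := hsq.tendsto_atTop_zero
  have h2 : Tendsto (fun n => Real.sqrt (α n ^ 2)) atTop (nhds (Real.sqrt 0)) :=
    (Real.continuous_sqrt.tendsto 0).comp h
  simp only [Real.sqrt_zero] at h2
  refine h2.congr (fun n => ?_)
  rw [Real.sqrt_sq (hpos n).le]

private lemma my_sum_blocks {f : ℕ → ℝ} {s : ℕ → ℕ} (hs : Monotone s) (M : ℕ) :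
    ∑ m ∈ Finset.range M, ∑ k ∈ Finset.Ico (s m) (s (m+1)), f k
      = ∑ k ∈ Finset.Ico (s 0) (s M), f k := by
  induction M with
  | zero => simp
  | succ M ih =>
      rw [Finset.sum_range_succ, ih,
        Finset.sum_Ico_consecutive _ (hs (Nat.zero_le M)) (hs (Nat.le_succ M))]


private lemma my_slow_var {α : ℕ → ℝ} {x : ℝ} (hpos : ∀ n, 0 < α n)
    (hT : Tendsto (fun n => ∑ k ∈ Finset.range (n+1), α k) atTop atTop)
    (hα0 : Tendsto α atTop (nhds 0))
    (hsum : ∀ ε > (0 : ℝ), ∃ n₀ : ℕ, ∀ n ≥ n₀, ∀ y ∈ Set.Icc x 1,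
      |(∑ k ∈ Finset.range (⌊y * (n : ℝ)⌋₊ + 1), α k) / (∑ k ∈ Finset.range (n + 1), α k) - 1| ≤ ε)
    (hx0 : 0 < x) (g : ℕ → ℕ) (hg1 : ∀ n, g n ≤ n + 1)
    (hg2 : ∀ᶠ n in atTop, x * n ≤ (g n : ℝ)) :
    Tendsto (fun n => (∑ k ∈ Finset.range (g n + 1), α k) / (∑ k ∈ Finset.range (n+1), α k))
      atTop (nhds 1) := by
  have hT0 : ∀ n, 0 < ∑ k ∈ Finset.range (n+1), α k := by
    intro n
    exact Finset.sum_pos (fun k _ => hpos k) (by simp)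
  rw [Metric.tendsto_atTop]
  intro ε hε
  obtain ⟨n₁, hn₁⟩ := hsum (ε/2) (by positivity)
  obtain ⟨n₂, hn₂⟩ := hg2.exists_forall_of_atTop
  have h3 : Tendsto (fun n => α (n+1) / (∑ k ∈ Finset.range (n+1), α k)) atTop (nhds 0) :=
    Tendsto.div_atTop (hα0.comp (tendsto_add_atTop_nat 1)) hT
  have h3' : ∀ᶠ n in atTop, |α (n+1) / (∑ k ∈ Finset.range (n+1), α k)| < ε/2 := by
    have := (Metric.tendsto_atTop.1 h3) (ε/2) (by positivity)
    obtain ⟨n₃, hn₃⟩ := this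
    filter_upwards [eventually_ge_atTop n₃] with n hn
    simpa [Real.dist_eq, abs_div] using hn₃ n hn
  obtain ⟨n₃, hn₃⟩ := h3'.exists_forall_of_atTop
  refine ⟨max (max n₁ n₂) (max n₃ 1), fun n hn => ?_⟩
  have hn1 : n₁ ≤ n := le_trans (le_trans (le_max_left _ _) (le_max_left _ _)) hn
  have hn2 : n₂ ≤ n := le_trans (le_trans (le_max_right _ _) (le_max_left _ _)) hn
  have hn3 : n₃ ≤ n := le_trans (le_trans (le_max_left _ _) (le_max_right _ _)) hn
  have hn4 : 1 ≤ n := le_trans (le_trans (le_max_right _ _) (le_max_right _ _)) hn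
  have hnR : (0 : ℝ) < n := by exact_mod_cast hn4
  rw [Real.dist_eq]
  rcases le_or_gt (g n) n with hle | hlt
  · set y : ℝ := (g n : ℝ) / n with hy
    have hy1 : y ∈ Set.Icc x 1 := by
      constructor
      · rw [hy, le_div_iff₀ hnR]
        exact hn₂ n hn2
      · rw [hy, div_le_one hnR]
        exact_mod_cast hle
    have hfloor : ⌊y * (n : ℝ)⌋₊ = g n := by
      rw [hy, div_mul_cancel₀ _ (ne_of_gt hnR), Nat.floor_natCast]
    have := hn₁ n hn1 y hy1
    rw [hfloor] at this
    exact lt_of_le_of_lt this (by linarith)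
  · have hgn : g n = n + 1 := le_antisymm (hg1 n) hlt
    rw [hgn, Finset.sum_range_succ]
    have heq : (∑ k ∈ Finset.range (n+1), α k + α (n+1)) / (∑ k ∈ Finset.range (n+1), α k) - 1
        = α (n+1) / (∑ k ∈ Finset.range (n+1), α k) := by
      rw [add_div, div_self (ne_of_gt (hT0 n))]
      ring
    rw [heq]
    exact lt_of_lt_of_le (hn₃ n hn3) (by linarith)

private lemma my_stolz {a b : ℕ → ℝ} (hb : ∀ m, 0 < b m)
    (hB : Tendsto (fun M => ∑ m ∈ Finset.range M, b m) atTop atTop)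
    {l : ℝ} (h : Tendsto (fun m => a m / b m) atTop (nhds l)) :
    Tendsto (fun M => (∑ m ∈ Finset.range M, a m) / (∑ m ∈ Finset.range M, b m))
      atTop (nhds l) := by
  rw [Metric.tendsto_atTop]
  intro ε hε
  obtain ⟨M₀, hM₀⟩ := Metric.tendsto_atTop.1 h (ε/4) (by positivity)
  have hkey : ∀ m ≥ M₀, |a m - l * b m| ≤ (ε/4) * b m := by
    intro m hm
    have := (hM₀ m hm).le
    rw [Real.dist_eq] at this
    have hbm := hb m
    calc |a m - l * b m| = |(a m / b m - l) * b m| := by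
          rw [sub_mul, div_mul_cancel₀ _ hbm.ne']
      _ = |a m / b m - l| * b m := by rw [abs_mul, abs_of_pos hbm]
      _ ≤ (ε/4) * b m := mul_le_mul_of_nonneg_right this hbm.le
  set C := ∑ m ∈ Finset.range M₀, |a m - l * b m| with hC
  have hC0 : 0 ≤ C := Finset.sum_nonneg fun m _ => abs_nonneg _
  obtain ⟨M₁, hM₁⟩ := (hB.eventually_ge_atTop (max (4*C/ε) 1)).exists_forall_of_atTop
  refine ⟨max M₀ M₁, fun M hM => ?_⟩
  have hMM₀ : M₀ ≤ M := le_trans (le_max_left _ _) hM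
  have hMM₁ : M₁ ≤ M := le_trans (le_max_right _ _) hM
  have hSB := hM₁ M hMM₁
  have hSB1 : (1:ℝ) ≤ ∑ m ∈ Finset.range M, b m := le_trans (le_max_right _ _) hSB
  have hSBC : 4*C/ε ≤ ∑ m ∈ Finset.range M, b m := le_trans (le_max_left _ _) hSB
  have hSB0 : (0:ℝ) < ∑ m ∈ Finset.range M, b m := lt_of_lt_of_le one_pos hSB1
  rw [Real.dist_eq]
  have hsplit : ∑ m ∈ Finset.range M, a m - l * ∑ m ∈ Finset.range M, b m
      = ∑ m ∈ Finset.range M, (a m - l * b m) := by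
    rw [Finset.sum_sub_distrib, Finset.mul_sum]
  have habs : |∑ m ∈ Finset.range M, a m - l * ∑ m ∈ Finset.range M, b m|
      ≤ C + (ε/4) * ∑ m ∈ Finset.range M, b m := by
    rw [hsplit]
    calc |∑ m ∈ Finset.range M, (a m - l * b m)| ≤ ∑ m ∈ Finset.range M, |a m - l * b m| :=
          Finset.abs_sum_le_sum_abs _ _
      _ = C + ∑ m ∈ Finset.Ico M₀ M, |a m - l * b m| := by
          rw [hC, Finset.range_eq_Ico, Finset.range_eq_Ico]
          exact (Finset.sum_Ico_consecutive (fun m => |a m - l * b m|) (Nat.zero_le M₀) hMM₀).symm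
      _ ≤ C + ∑ m ∈ Finset.Ico M₀ M, (ε/4) * b m := by
          gcongr with m hm
          exact hkey m (Finset.mem_Ico.1 hm).1
      _ = C + (ε/4) * ∑ m ∈ Finset.Ico M₀ M, b m := by rw [Finset.mul_sum]
      _ ≤ C + (ε/4) * ∑ m ∈ Finset.range M, b m := by
          have hsub : ∑ m ∈ Finset.Ico M₀ M, b m ≤ ∑ m ∈ Finset.range M, b m := by
            rw [Finset.range_eq_Ico]
            exact Finset.sum_le_sum_of_subset_of_nonneg
              (Finset.Ico_subset_Ico (Nat.zero_le _) le_rfl) (fun m _ _ => (hb m).le)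
          have := mul_le_mul_of_nonneg_left hsub (by positivity : (0:ℝ) ≤ ε/4)
          linarith
  have heq : (∑ m ∈ Finset.range M, a m) / (∑ m ∈ Finset.range M, b m) - l
      = (∑ m ∈ Finset.range M, a m - l * ∑ m ∈ Finset.range M, b m) / (∑ m ∈ Finset.range M, b m) := by
    rw [sub_div, mul_div_assoc, div_self hSB0.ne', mul_one]
  rw [heq, abs_div, abs_of_pos hSB0, div_lt_iff₀ hSB0]
  have hCb : C ≤ (ε/4) * ∑ m ∈ Finset.range M, b m := by
    rw [div_le_iff₀ hε] at hSBC
    nlinarith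
  nlinarith [habs]

private lemma my_div_div {p q t : ℝ} (ht : t ≠ 0) : (p/t)/(q/t) = p/q := by
  rcases eq_or_ne q 0 with h | h
  · simp [h]
  · field_simp

/-- **Remark 2(a).** Under Assumptions 3 and 4, the almost-sure limits in Assumption 4(ii)
must all equal `1`. -/
theorem assumption4ii_limits_equal_one
    {d : ℕ} (hd : 1 ≤ d)
    {Ω : Type*} [m0 : MeasurableSpace Ω] (μ : Measure Ω) [IsProbabilityMeasure μ]
    (Y : ℕ → Ω → Finset (Fin d)) (hYne : ∀ n ω, (Y n ω).Nonempty)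
    (ν : ℕ → Fin d → Ω → ℕ)
    (hν : ∀ n i ω, ν n i ω = ∑ k ∈ Finset.range (n + 1), if i ∈ Y k ω then 1 else 0)
    (α : ℕ → ℝ) (hαpos : ∀ n, 0 < α n)
    -- Assumption 3(i)
    (hαdiv : ¬ Summable α) (hαsq : Summable fun n => (α n) ^ 2)
    (hαmono : ∃ n₀ : ℕ, ∀ n ≥ n₀, α (n + 1) ≤ α n)
    -- Assumption 3(ii)
    (hαratio : ∀ z : ℝ, 0 < z → z < 1 → ∃ B : ℝ, ∀ n : ℕ, α ⌊z * (n : ℝ)⌋₊ / α n ≤ B)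
    -- Assumption 3(iii)
    (hαsum : ∀ z : ℝ, 0 < z → z < 1 → ∀ ε > (0 : ℝ), ∃ n₀ : ℕ, ∀ n ≥ n₀, ∀ y ∈ Set.Icc z 1,
      |(∑ k ∈ Finset.range (⌊y * (n : ℝ)⌋₊ + 1), α k) / (∑ k ∈ Finset.range (n + 1), α k) - 1| ≤ ε)
    -- Assumption 4, with N(n,x) := min{m > n : Σ_{k=n}^m α_k ≥ x}
    (N : ℕ → ℝ → ℕ)
    (hN : ∀ n z, N n z = sInf {m | n < m ∧ z ≤ ∑ k ∈ Finset.Icc n m, α k})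
    (Δ : ℝ) (hΔ : 0 < Δ)
    (hfreq : ∀ i, ∀ᵐ ω ∂μ, Δ ≤ Filter.liminf (fun n => (ν n i ω : ℝ) / (n : ℝ)) atTop)
    (hratio : ∀ z : ℝ, 0 < z → ∀ i j : Fin d, ∀ᵐ ω ∂μ, ∃ ℓ : ℝ,
      Filter.Tendsto (fun n =>
        (∑ k ∈ Finset.Icc (ν n i ω) (ν (N n z) i ω), α k) /
        (∑ k ∈ Finset.Icc (ν n j ω) (ν (N n z) j ω), α k)) Filter.atTop (nhds ℓ))
    :
    ∀ z : ℝ, 0 < z → ∀ i j : Fin d, ∀ᵐ ω ∂μ,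
      Tendsto (fun n =>
        (∑ k ∈ Finset.Icc (ν n i ω) (ν (N n z) i ω), α k) /
        (∑ k ∈ Finset.Icc (ν n j ω) (ν (N n z) j ω), α k)) atTop (nhds 1) := by
  intro z hz i j
  filter_upwards [hratio z hz i j, hfreq i, hfreq j] with ω hℓω hfi hfj
  obtain ⟨ℓ, hℓ⟩ := hℓω
  suffices h1 : ℓ = 1 by rw [← h1]; exact hℓ
  -- basic objects
  set T : ℕ → ℝ := fun n => ∑ k ∈ Finset.range (n+1), α k with hTdef
  have hT0 : ∀ n, 0 < T n := fun n => Finset.sum_pos (fun k _ => hαpos k) (by simp)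
  have hTtop : Tendsto T atTop atTop := my_T_atTop hαpos hαdiv
  have hα0 : Tendsto α atTop (nhds 0) := my_alpha_zero hαpos hαsq
  have hIcc : ∀ p q : ℕ, p ≤ q → ∑ k ∈ Finset.Icc p q, α k = T q - (T p - α p) := by
    intro p q hpq
    rw [← Finset.Ico_add_one_right_eq_Icc, Finset.sum_Ico_eq_sub _ (le_trans hpq (Nat.le_add_right q 1))]
    have h2 : ∑ k ∈ Finset.range p, α k = T p - α p := by
      simp only [hTdef, Finset.sum_range_succ]; ring
    rw [h2]
  -- x and lower-frequency facts
  set x : ℝ := min Δ 1 / 2 with hxdef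
  have hx0 : 0 < x := by
    have : 0 < min Δ 1 := lt_min hΔ one_pos
    positivity
  have hx1 : x < 1 := by
    have : min Δ 1 ≤ 1 := min_le_right _ _
    rw [hxdef]; linarith
  have hxΔ : x < Δ := by
    have h1 : min Δ 1 ≤ Δ := min_le_left _ _
    have : 0 < min Δ 1 := lt_min hΔ one_pos
    rw [hxdef]; linarith
  have hνmono : ∀ i' : Fin d, Monotone fun n => ν n i' ω := by
    intro i'
    apply monotone_nat_of_le_succ
    intro n
    simp only [hν]
    exact Finset.sum_le_sum_of_subset (Finset.range_subset_range.2 (by omega))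
  have hνle : ∀ (i' : Fin d) n, ν n i' ω ≤ n + 1 := by
    intro i' n
    rw [hν]
    calc (∑ k ∈ Finset.range (n + 1), if i' ∈ Y k ω then 1 else 0)
        ≤ ∑ k ∈ Finset.range (n+1), 1 :=
          Finset.sum_le_sum (fun k _ => by split <;> simp)
      _ = n + 1 := by simp
  have hlow : ∀ i' : Fin d, Δ ≤ liminf (fun n => (ν n i' ω : ℝ)/(n:ℝ)) atTop →
      ∀ᶠ n in atTop, x * n ≤ ((ν n i' ω : ℕ) : ℝ) := by
    intro i' hfi'
    have hbdd : IsBoundedUnder (· ≥ ·) atTop (fun n => (ν n i' ω : ℝ)/(n:ℝ)) :=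
      isBoundedUnder_of ⟨0, fun n => by positivity⟩
    have hev : ∀ᶠ n in atTop, x < (ν n i' ω : ℝ)/(n:ℝ) :=
      eventually_lt_of_lt_liminf (lt_of_lt_of_le hxΔ hfi') hbdd
    filter_upwards [hev, eventually_ge_atTop 1] with n h1 h2
    have hn0 : (0:ℝ) < n := by exact_mod_cast h2
    have := (lt_div_iff₀ hn0).1 h1
    linarith
  obtain ⟨m₁, hm₁⟩ := eventually_atTop.1 (hlow i hfi)
  obtain ⟨m₂, hm₂⟩ := eventually_atTop.1 (hlow j hfj)
  obtain ⟨K, hK⟩ := hαmono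
  have hanti := my_alpha_antitone hK
  obtain ⟨n₂, hn₂⟩ := exists_nat_ge ((K:ℝ)/x)
  have hKn₂ : (K:ℝ) ≤ x * n₂ := by
    rw [div_le_iff₀ hx0] at hn₂; linarith
  set n₀ : ℕ := max (max m₁ m₂) (max n₂ (K+1)) with hn₀def
  have hn₀m₁ : m₁ ≤ n₀ := le_trans (le_max_left _ _) (le_max_left _ _)
  have hn₀m₂ : m₂ ≤ n₀ := le_trans (le_max_right _ _) (le_max_left _ _)
  have hn₀n₂ : n₂ ≤ n₀ := le_trans (le_max_left _ _) (le_max_right _ _)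
  have hn₀K : K ≤ n₀ := le_trans (le_trans (Nat.le_succ K) (le_max_right _ _)) (le_max_right _ _)
  have hloi : ∀ n, n₀ ≤ n → x * n ≤ ((ν n i ω : ℕ) : ℝ) := fun n hn => hm₁ n (le_trans hn₀m₁ hn)
  have hloj : ∀ n, n₀ ≤ n → x * n ≤ ((ν n j ω : ℕ) : ℝ) := fun n hn => hm₂ n (le_trans hn₀m₂ hn)
  have hKx : ∀ n, n₀ ≤ n → K ≤ ⌊x * (n:ℝ)⌋₊ := by
    intro n hn
    apply Nat.le_floor
    have h1 : (n₂:ℝ) ≤ n := by exact_mod_cast le_trans hn₀n₂ hn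
    nlinarith
  have hKle : ∀ n, n₀ ≤ n → K ≤ n := fun n hn => le_trans hn₀K hn
  -- N facts
  have hNmem : ∀ n, n < N n z ∧ z ≤ ∑ k ∈ Finset.Icc n (N n z), α k := by
    intro n
    rw [hN]
    have h1 : Tendsto (fun m => T m + -(T n - α n)) atTop atTop :=
      tendsto_atTop_add_const_right atTop _ hTtop
    have h2 : ∀ᶠ m in atTop, z ≤ T m + -(T n - α n) := h1.eventually_ge_atTop z
    obtain ⟨m, hm1, hm2⟩ := (h2.and (eventually_gt_atTop n)).exists
    have hne : {m | n < m ∧ z ≤ ∑ k ∈ Finset.Icc n m, α k}.Nonempty := by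
      refine ⟨m, hm2, ?_⟩
      rw [hIcc n m hm2.le]
      linarith
    exact Nat.sInf_mem hne
  -- the iterated windows
  set seq : ℕ → ℕ := fun m => Nat.rec n₀ (fun _ p => N p z) m with hseqdef
  have hseq0 : seq 0 = n₀ := rfl
  have hseqS : ∀ m, seq (m+1) = N (seq m) z := fun m => rfl
  have hseqSM : StrictMono seq := strictMono_nat_of_lt_succ fun m => (hNmem (seq m)).1
  have hseqge : ∀ m, n₀ ≤ seq m := fun m => hseq0 ▸ hseqSM.monotone (Nat.zero_le m)
  have hseqtop : Tendsto seq atTop atTop := hseqSM.tendsto_atTop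
  -- the block sums
  set a : ℕ → ℝ := fun m => ∑ k ∈ Finset.Icc (ν (seq m) i ω) (ν (seq (m+1)) i ω), α k with hadef
  set b : ℕ → ℝ := fun m => ∑ k ∈ Finset.Icc (ν (seq m) j ω) (ν (seq (m+1)) j ω), α k with hbdef
  have hsub : Tendsto (fun m => a m / b m) atTop (nhds ℓ) := by
    have h := hℓ.comp hseqtop
    exact h.congr fun m => rfl
  -- telescoping
  have htel : ∀ g : ℕ → ℕ, Monotone g → ∀ M : ℕ,
      ∑ m ∈ Finset.range M, (∑ k ∈ Finset.Icc (g (seq m)) (g (seq (m+1))), α k)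
        = T (g (seq M)) - T (g (seq 0)) + ∑ m ∈ Finset.range M, α (g (seq m)) := by
    intro g hg M
    have hterm : ∀ m : ℕ, (∑ k ∈ Finset.Icc (g (seq m)) (g (seq (m+1))), α k)
        = (T (g (seq (m+1))) - T (g (seq m))) + α (g (seq m)) := by
      intro m
      rw [hIcc _ _ (hg (hseqSM.monotone (Nat.le_succ m)))]
      ring
    rw [Finset.sum_congr rfl (fun m _ => hterm m), Finset.sum_add_distrib,
      Finset.sum_range_sub (fun m => T (g (seq m)))]
  -- bound on correction terms
  have hRbound : ∀ g : ℕ → ℕ, (∀ n, n₀ ≤ n → x * n ≤ (g n : ℝ)) →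
      ∃ C : ℝ, ∀ M, ∑ m ∈ Finset.range M, α (g (seq m)) ≤ C := by
    intro g hglow
    obtain ⟨B, hB⟩ := hαratio x hx0 hx1
    have hB1 : (1:ℝ) ≤ B := by
      have := hB 0
      simpa [div_self (hαpos 0).ne'] using this
    have hstep1 : ∀ n, n₀ ≤ n → α (g n) ≤ B * α n := by
      intro n hn
      have h1 : ⌊x * (n:ℝ)⌋₊ ≤ g n := by
        have := Nat.floor_le_floor (hglow n hn)
        simpa using this
      have h3 : α (g n) ≤ α ⌊x * (n:ℝ)⌋₊ := hanti _ _ (hKx n hn) h1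
      have h4 : α ⌊x * (n:ℝ)⌋₊ ≤ B * α n := (div_le_iff₀ (hαpos n)).1 (hB n)
      linarith
    have hstep2 : ∀ m : ℕ, z * α (seq (m+1)) ≤ ∑ k ∈ Finset.Icc (seq m) (seq (m+1)), α k ^ 2 := by
      intro m
      have hz2 : z ≤ ∑ k ∈ Finset.Icc (seq m) (seq (m+1)), α k := (hNmem (seq m)).2
      have hle : ∀ k ∈ Finset.Icc (seq m) (seq (m+1)), α (seq (m+1)) ≤ α k := by
        intro k hk
        obtain ⟨hk1, hk2⟩ := Finset.mem_Icc.1 hk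
        exact hanti k (seq (m+1)) (le_trans (hKle (seq m) (hseqge m)) hk1) hk2
      calc z * α (seq (m+1))
          ≤ (∑ k ∈ Finset.Icc (seq m) (seq (m+1)), α k) * α (seq (m+1)) :=
            mul_le_mul_of_nonneg_right hz2 (hαpos _).le
        _ = ∑ k ∈ Finset.Icc (seq m) (seq (m+1)), α k * α (seq (m+1)) := Finset.sum_mul _ _ _
        _ ≤ ∑ k ∈ Finset.Icc (seq m) (seq (m+1)), α k ^ 2 := by
            apply Finset.sum_le_sum
            intro k hk
            rw [sq]
            exact mul_le_mul_of_nonneg_left (hle k hk) (hαpos k).le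
    set Q : ℝ := ∑' k, α k ^ 2 with hQdef
    have hQ0 : 0 ≤ Q := tsum_nonneg fun k => sq_nonneg _
    have hstep3 : ∀ M : ℕ,
        ∑ m ∈ Finset.range M, (∑ k ∈ Finset.Icc (seq m) (seq (m+1)), α k ^ 2) ≤ 2 * Q := by
      intro M
      have hsplit : ∀ m : ℕ, ∑ k ∈ Finset.Icc (seq m) (seq (m+1)), α k ^ 2
          = (∑ k ∈ Finset.Ico (seq m) (seq (m+1)), α k ^ 2) + α (seq (m+1)) ^ 2 := by
        intro m
        rw [← Finset.Ico_add_one_right_eq_Icc, Finset.sum_Ico_succ_top (hseqSM.monotone (Nat.le_succ m))]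
      rw [Finset.sum_congr rfl (fun m _ => hsplit m), Finset.sum_add_distrib]
      have h1 : ∑ m ∈ Finset.range M, (∑ k ∈ Finset.Ico (seq m) (seq (m+1)), α k ^ 2)
          = ∑ k ∈ Finset.Ico (seq 0) (seq M), α k ^ 2 := my_sum_blocks hseqSM.monotone M
      have h2 : ∑ k ∈ Finset.Ico (seq 0) (seq M), α k ^ 2 ≤ Q :=
        Summable.sum_le_tsum _ (fun k _ => sq_nonneg _) hαsq
      have h3 : ∑ m ∈ Finset.range M, α (seq (m+1)) ^ 2 ≤ Q := by
        have hinj : ∀ p ∈ Finset.range M, ∀ q ∈ Finset.range M,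
            seq (p+1) = seq (q+1) → p = q := by
          intro p _ q _ hpq
          rcases lt_trichotomy p q with h | h | h
          · exact absurd hpq (ne_of_lt (hseqSM (Nat.succ_lt_succ h)))
          · exact h
          · exact absurd hpq.symm (ne_of_lt (hseqSM (Nat.succ_lt_succ h)))
        have himg : ∑ m ∈ (Finset.range M).image (fun m => seq (m+1)), α m ^ 2
            = ∑ m ∈ Finset.range M, α (seq (m+1)) ^ 2 := Finset.sum_image hinj
        rw [← himg]
        exact Summable.sum_le_tsum _ (fun k _ => sq_nonneg _) hαsq
      linarith
    refine ⟨B * α n₀ + B * (2 * Q / z), fun M => ?_⟩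
    match M with
    | 0 =>
        simp only [Finset.range_zero, Finset.sum_empty]
        have h5 : 0 < α n₀ := hαpos n₀
        have h6 : 0 ≤ 2 * Q / z := by positivity
        nlinarith
    | Nat.succ M' =>
        rw [Finset.sum_range_succ']
        have hf0 : α (g (seq 0)) ≤ B * α n₀ := by rw [hseq0]; exact hstep1 n₀ le_rfl
        have hrest : ∑ m ∈ Finset.range M', α (g (seq (m+1))) ≤ B * (2 * Q / z) := by
          calc ∑ m ∈ Finset.range M', α (g (seq (m+1)))
              ≤ ∑ m ∈ Finset.range M', B * α (seq (m+1)) :=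
                Finset.sum_le_sum fun m _ => hstep1 (seq (m+1)) (hseqge (m+1))
            _ = B * ∑ m ∈ Finset.range M', α (seq (m+1)) := by rw [Finset.mul_sum]
            _ ≤ B * (2 * Q / z) := by
                apply mul_le_mul_of_nonneg_left _ (le_trans zero_le_one hB1)
                rw [le_div_iff₀ hz]
                calc (∑ m ∈ Finset.range M', α (seq (m+1))) * z
                    = ∑ m ∈ Finset.range M', z * α (seq (m+1)) := by
                      rw [Finset.sum_mul]; exact Finset.sum_congr rfl fun m _ => mul_comm _ _
                  _ ≤ ∑ m ∈ Finset.range M', (∑ k ∈ Finset.Icc (seq m) (seq (m+1)), α k ^ 2) :=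
                      Finset.sum_le_sum fun m _ => hstep2 m
                  _ ≤ 2 * Q := hstep3 M'
        linarith
  obtain ⟨Ci, hCi⟩ := hRbound (fun n => ν n i ω) hloi
  obtain ⟨Cj, hCj⟩ := hRbound (fun n => ν n j ω) hloj
  have hAsum : ∀ M : ℕ, ∑ m ∈ Finset.range M, a m
      = T (ν (seq M) i ω) - T (ν (seq 0) i ω) + ∑ m ∈ Finset.range M, α (ν (seq m) i ω) :=
    htel (fun n => ν n i ω) (hνmono i)
  have hBsum : ∀ M : ℕ, ∑ m ∈ Finset.range M, b m
      = T (ν (seq M) j ω) - T (ν (seq 0) j ω) + ∑ m ∈ Finset.range M, α (ν (seq m) j ω) :=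
    htel (fun n => ν n j ω) (hνmono j)
  -- slow variation limits
  have hslowi : Tendsto (fun M => T (ν (seq M) i ω) / T (seq M)) atTop (nhds 1) := by
    have h := my_slow_var hαpos hTtop hα0 (hαsum x hx0 hx1) hx0 (fun n => ν n i ω)
      (hνle i) (hlow i hfi)
    exact (h.comp hseqtop).congr fun M => rfl
  have hslowj : Tendsto (fun M => T (ν (seq M) j ω) / T (seq M)) atTop (nhds 1) := by
    have h := my_slow_var hαpos hTtop hα0 (hαsum x hx0 hx1) hx0 (fun n => ν n j ω)
      (hνle j) (hlow j hfj)
    exact (h.comp hseqtop).congr fun M => rfl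
  -- the correction terms vanish relative to T (seq M)
  have hTseqtop : Tendsto (fun M => T (seq M)) atTop atTop := hTtop.comp hseqtop
  have hzero : ∀ (R : ℕ → ℝ) (C c : ℝ), 0 ≤ c → (∀ M, 0 ≤ R M) → (∀ M, R M ≤ C) →
      Tendsto (fun M => (R M - c) / T (seq M)) atTop (nhds 0) := by
    intro R C c hc hR0 hRC
    rw [tendsto_zero_iff_abs_tendsto_zero]
    apply squeeze_zero (g := fun M => (C + c) / T (seq M)) (fun M => abs_nonneg _)
    · intro M
      rw [abs_div, abs_of_pos (hT0 _)]
      apply (div_le_div_iff_of_pos_right (hT0 (seq M))).2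
      rcases abs_cases (R M - c) with ⟨h, _⟩ | ⟨h, _⟩ <;> linarith [hRC M, hR0 M]
    · exact tendsto_const_nhds.div_atTop hTseqtop
  have hzeroi := hzero (fun M => ∑ m ∈ Finset.range M, α (ν (seq m) i ω)) Ci
    (T (ν (seq 0) i ω)) (hT0 _).le
    (fun M => Finset.sum_nonneg fun m _ => (hαpos _).le) hCi
  have hzeroj := hzero (fun M => ∑ m ∈ Finset.range M, α (ν (seq m) j ω)) Cj
    (T (ν (seq 0) j ω)) (hT0 _).le
    (fun M => Finset.sum_nonneg fun m _ => (hαpos _).le) hCj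
  have hnumi : Tendsto (fun M => (∑ m ∈ Finset.range M, a m) / T (seq M)) atTop (nhds 1) := by
    have heq : ∀ M, (∑ m ∈ Finset.range M, a m) / T (seq M)
        = T (ν (seq M) i ω) / T (seq M)
          + ((∑ m ∈ Finset.range M, α (ν (seq m) i ω)) - T (ν (seq 0) i ω)) / T (seq M) := by
      intro M
      rw [hAsum M, ← add_div]
      congr 1
      ring
    have := hslowi.add hzeroi
    rw [add_zero] at this
    exact this.congr fun M => (heq M).symm
  have hnumj : Tendsto (fun M => (∑ m ∈ Finset.range M, b m) / T (seq M)) atTop (nhds 1) := by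
    have heq : ∀ M, (∑ m ∈ Finset.range M, b m) / T (seq M)
        = T (ν (seq M) j ω) / T (seq M)
          + ((∑ m ∈ Finset.range M, α (ν (seq m) j ω)) - T (ν (seq 0) j ω)) / T (seq M) := by
      intro M
      rw [hBsum M, ← add_div]
      congr 1
      ring
    have := hslowj.add hzeroj
    rw [add_zero] at this
    exact this.congr fun M => (heq M).symm
  have hr1 : Tendsto (fun M => (∑ m ∈ Finset.range M, a m) / (∑ m ∈ Finset.range M, b m))
      atTop (nhds 1) := by
    have h := hnumi.div hnumj one_ne_zero
    rw [div_one] at h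
    exact h.congr fun M => my_div_div (hT0 (seq M)).ne'
  -- Stolz–Cesàro side
  have hbpos : ∀ m, 0 < b m := fun m =>
    Finset.sum_pos (fun k _ => hαpos k)
      (Finset.nonempty_Icc.2 (hνmono j (hseqSM.monotone (Nat.le_succ m))))
  have hνjtop : Tendsto (fun n => ν n j ω) atTop atTop := by
    rw [← tendsto_natCast_atTop_iff (R := ℝ)]
    apply tendsto_atTop_mono' atTop (hlow j hfj)
    exact (tendsto_natCast_atTop_atTop).const_mul_atTop hx0
  have hBtop : Tendsto (fun M => ∑ m ∈ Finset.range M, b m) atTop atTop := by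
    apply tendsto_atTop_mono (g := fun M => ∑ m ∈ Finset.range M, b m)
      (f := fun M => T (ν (seq M) j ω) + -(T (ν (seq 0) j ω)))
    · intro M
      rw [hBsum M]
      have : (0:ℝ) ≤ ∑ m ∈ Finset.range M, α (ν (seq m) j ω) :=
        Finset.sum_nonneg fun m _ => (hαpos _).le
      linarith
    · exact tendsto_atTop_add_const_right atTop _ (hTtop.comp (hνjtop.comp hseqtop))
  exact tendsto_nhds_unique (my_stolz hbpos hBtop hsub) hr1
end

section
/- There exists T > 0, depending only on h_∞, d, and C (in particular, not on the choice of ρ), such that for every Borel-measurable function ρ : [0,∞) → [1/d, C] and every locally absolutely continuous φ : [0,∞) → ℝ^d with ‖φ(0)‖ = 1 and φ'(t) = ρ(t) h_∞(φ(t)) for almost every t ≥ 0, one has ‖φ(t)‖ < 1/8 for all t ≥ T. -/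
open MeasureTheory Filter intervalIntegral

section AuxODE
open Set

set_option linter.unusedSectionVars false
set_option linter.unusedVariables false

variable {E : Type*} [NormedAddCommGroup E] [NormedSpace ℝ E] [CompleteSpace E]


variable {E : Type*} [NormedAddCommGroup E] [NormedSpace ℝ E] [CompleteSpace E]

/-- Uniform-step local existence for a globally Lipschitz autonomous vector field. -/
theorem loc_exists (f : E → E) (L : NNReal) (hf : LipschitzWith L f) (x₀ : E) (t₀ : ℝ) :
    ∃ α : ℝ → E, α t₀ = x₀ ∧ ∀ t ∈ Icc (t₀ - (2 * ((L:ℝ) + 1))⁻¹) (t₀ + (2 * ((L:ℝ) + 1))⁻¹),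
      HasDerivWithinAt α (f (α t))
        (Icc (t₀ - (2 * ((L:ℝ) + 1))⁻¹) (t₀ + (2 * ((L:ℝ) + 1))⁻¹)) t := by
  set ε : ℝ := (2 * ((L:ℝ) + 1))⁻¹ with hε
  have hL1 : (0:ℝ) < (L:ℝ) + 1 := by positivity
  have hε0 : 0 < ε := by positivity
  set R : ℝ := ‖f x₀‖ + 1 with hR
  have hRpos : 0 < R := by positivity
  have hpl : IsPicardLindelof (fun _ : ℝ => f) (tmin := t₀ - ε) (tmax := t₀ + ε)
      ⟨t₀, by constructor <;> linarith⟩ x₀ ⟨R, hRpos.le⟩ 0 ⟨((L:ℝ) + 1) * R, by positivity⟩ L := by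
    apply IsPicardLindelof.of_time_independent
    · intro x hx
      have h1 : ‖f x - f x₀‖ ≤ (L:ℝ) * R := by
        have := hf.dist_le_mul x x₀
        rw [dist_eq_norm] at this
        calc ‖f x - f x₀‖ ≤ (L:ℝ) * dist x x₀ := this
        _ ≤ (L:ℝ) * R := by
            have := Metric.mem_closedBall.mp hx
            exact mul_le_mul_of_nonneg_left this L.coe_nonneg
      have h2 : ‖f x₀‖ ≤ R := by rw [hR]; linarith
      calc ‖f x‖ = ‖f x - f x₀ + f x₀‖ := by rw [sub_add_cancel]
      _ ≤ ‖f x - f x₀‖ + ‖f x₀‖ := norm_add_le _ _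
      _ ≤ (L:ℝ) * R + R := add_le_add h1 h2
      _ = ((L:ℝ) + 1) * R := by ring
    · exact hf.lipschitzOnWith
    · have : max (t₀ + ε - t₀) (t₀ - (t₀ - ε)) = ε := by simp
      simp only [NNReal.coe_mk, tsub_zero]
      rw [this]
      have : ((L:ℝ) + 1) * R * ε = R / 2 := by
        rw [hε]; field_simp
      show ((L:ℝ) + 1) * R * ε ≤ R - 0
      rw [this]; linarith
  obtain ⟨α, hα0, hα⟩ := hpl.exists_eq_forall_mem_Icc_hasDerivWithinAt₀
  exact ⟨α, hα0, hα⟩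

/-- Solutions on `Icc 0 (n * ε)` by induction. -/
theorem seg_exists (f : E → E) (L : NNReal) (hf : LipschitzWith L f) (x₀ : E) (n : ℕ) :
    ∃ α : ℝ → E, α 0 = x₀ ∧ ∀ t ∈ Icc (0:ℝ) (n * (2 * ((L:ℝ) + 1))⁻¹),
      HasDerivWithinAt α (f (α t)) (Icc (0:ℝ) (n * (2 * ((L:ℝ) + 1))⁻¹)) t := by
  set ε : ℝ := (2 * ((L:ℝ) + 1))⁻¹ with hεdef
  have hε0 : 0 < ε := by positivity
  induction n with
  | zero =>
    obtain ⟨α, hα0, hα⟩ := loc_exists f L hf x₀ 0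
    refine ⟨α, hα0, ?_⟩
    intro t ht
    simp only [Nat.cast_zero, zero_mul] at ht ⊢
    rw [Icc_self] at ht ⊢
    rcases ht with rfl
    have h0 : (0:ℝ) ∈ Icc (0 - ε) (0 + ε) := by
      constructor <;> [linarith; linarith]
    exact (hα 0 h0).mono (Set.singleton_subset_iff.mpr h0)
  | succ n ih =>
    obtain ⟨α, hα0, hα⟩ := ih
    set a : ℝ := n * ε with hadef
    have ha0 : 0 ≤ a := by positivity
    obtain ⟨β, hβa, hβ⟩ := loc_exists f L hf (α a) a
    -- β solves on J⁺ = Icc (a - ε) (a + ε), with β a = α a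
    set m : ℝ := max (a - ε) 0 with hmdef
    have hma : m ≤ a := max_le (by linarith) ha0
    have hsub1 : Icc m a ⊆ Icc (0:ℝ) a := Icc_subset_Icc (le_max_right _ _) le_rfl
    have hsub2 : Icc m a ⊆ Icc (a - ε) (a + ε) :=
      Icc_subset_Icc (le_max_left _ _) (by linarith)
    -- α = β on Icc m a by uniqueness (backward from a)
    have hagree : EqOn α β (Icc m a) := by
      apply ODE_solution_unique_of_mem_Icc_left
        (v := fun _ y => f y) (s := fun _ => univ) (K := L)
        (fun t _ => hf.lipschitzOnWith)
      · exact fun t ht => ((hα t (hsub1 ht)).continuousWithinAt).mono hsub1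
      · intro t ht
        have ht' : t ∈ Icc (0:ℝ) a := hsub1 (Ioc_subset_Icc_self ht)
        refine (hα t ht').mono_of_mem_nhdsWithin ?_
        have : Iic t ∩ Ioi (0:ℝ) ⊆ Icc (0:ℝ) a := fun s hs =>
          ⟨le_of_lt hs.2, le_trans hs.1 ht'.2⟩
        refine mem_nhdsWithin_iff_exists_mem_nhds_inter.mpr
          ⟨Ioi (0:ℝ), ?_, by rw [Set.inter_comm]; exact this⟩
        exact Ioi_mem_nhds (lt_of_le_of_lt (le_max_right _ _) ht.1)
      · exact fun _ _ => trivial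
      · exact fun t ht => ((hβ t (hsub2 ht)).continuousWithinAt).mono hsub2
      · intro t ht
        have ht' : t ∈ Icc (a - ε) (a + ε) := hsub2 (Ioc_subset_Icc_self ht)
        refine (hβ t ht').mono_of_mem_nhdsWithin ?_
        have : Iic t ∩ Ioi (a - ε) ⊆ Icc (a - ε) (a + ε) := fun s hs =>
          ⟨le_of_lt hs.2, le_trans hs.1 ht'.2⟩
        refine mem_nhdsWithin_iff_exists_mem_nhds_inter.mpr
          ⟨Ioi (a - ε), ?_, by rw [Set.inter_comm]; exact this⟩
        exact Ioi_mem_nhds (lt_of_le_of_lt (le_max_left _ _) ht.1)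
      · exact fun _ _ => trivial
      · exact hβa.symm
    set α' : ℝ → E := fun t => if t ≤ a then α t else β t with hα'def
    have hα'eqβ : EqOn α' β (Icc m (a + ε)) := by
      intro t ht
      by_cases h : t ≤ a
      · simp only [hα'def, if_pos h]
        exact hagree ⟨ht.1, h⟩
      · simp only [hα'def, if_neg h]
    have hα'eqα : EqOn α' α (Icc (0:ℝ) a) := by
      intro t ht; simp only [hα'def, if_pos ht.2]
    have hcast : ((n:ℝ) + 1) * ε = a + ε := by rw [hadef]; ring
    refine ⟨α', by simp [hα'def, ha0, hα0], ?_⟩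
    intro t ht
    rw [Nat.cast_succ, hcast] at ht ⊢
    have htarget : Icc (0:ℝ) (a + ε) = Icc (0:ℝ) (a + ε) := rfl
    by_cases hta : t < a
    · -- use α
      have ht' : t ∈ Icc (0:ℝ) a := ⟨ht.1, le_of_lt hta⟩
      have hmem : Icc (0:ℝ) a ∈ nhdsWithin t (Icc (0:ℝ) (a + ε)) := by
        refine mem_nhdsWithin_iff_exists_mem_nhds_inter.mpr
          ⟨Iio a, Iio_mem_nhds hta, fun s hs => ⟨hs.2.1, le_of_lt hs.1⟩⟩
      have : HasDerivWithinAt α (f (α t)) (Icc (0:ℝ) (a + ε)) t :=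
        (hα t ht').mono_of_mem_nhdsWithin hmem
      rw [show α' t = α t from hα'eqα ht']
      refine this.congr_of_eventuallyEq ?_ (hα'eqα ht')
      exact Filter.eventuallyEq_of_mem hmem (fun s hs => hα'eqα hs)
    · -- use β
      push_neg at hta
      have ht' : t ∈ Icc (a - ε) (a + ε) := ⟨by linarith, ht.2⟩
      have hmem : Icc (a - ε) (a + ε) ∈ nhdsWithin t (Icc (0:ℝ) (a + ε)) := by
        refine mem_nhdsWithin_iff_exists_mem_nhds_inter.mpr
          ⟨Ioi (a - ε), Ioi_mem_nhds (by linarith), fun s hs => ⟨le_of_lt hs.1, hs.2.2⟩⟩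
      have hmem2 : Icc m (a + ε) ∈ nhdsWithin t (Icc (0:ℝ) (a + ε)) := by
        refine mem_nhdsWithin_iff_exists_mem_nhds_inter.mpr
          ⟨Ioi (a - ε), Ioi_mem_nhds (by linarith), fun s hs =>
            ⟨max_le (le_of_lt hs.1) hs.2.1, hs.2.2⟩⟩
      have hβ' : HasDerivWithinAt β (f (β t)) (Icc (0:ℝ) (a + ε)) t :=
        (hβ t ht').mono_of_mem_nhdsWithin hmem
      have htm : t ∈ Icc m (a + ε) := ⟨le_trans hma hta, ht.2⟩
      rw [show α' t = β t from hα'eqβ htm]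
      refine hβ'.congr_of_eventuallyEq ?_ (hα'eqβ htm)
      exact Filter.eventuallyEq_of_mem hmem2 (fun s hs => hα'eqβ hs)

/-- Uniqueness on `Icc 0 b` for within-solutions. -/
theorem seg_unique (f : E → E) (L : NNReal) (hf : LipschitzWith L f) {α β : ℝ → E} {b b' : ℝ}
    (hα : ∀ t ∈ Icc (0:ℝ) b, HasDerivWithinAt α (f (α t)) (Icc (0:ℝ) b) t)
    (hβ : ∀ t ∈ Icc (0:ℝ) b', HasDerivWithinAt β (f (β t)) (Icc (0:ℝ) b') t)
    (h0 : α 0 = β 0) (hbb : b ≤ b') (hb : 0 ≤ b) :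
    EqOn α β (Icc (0:ℝ) b) := by
  apply ODE_solution_unique (v := fun _ y => f y) (K := L) (fun _ => hf)
  · exact fun t ht => ((hα t ht).continuousWithinAt)
  · intro t ht
    refine (hα t (Ico_subset_Icc_self ht)).mono_of_mem_nhdsWithin ?_
    refine mem_nhdsWithin_iff_exists_mem_nhds_inter.mpr
      ⟨Iio b, Iio_mem_nhds ht.2, fun s hs => ⟨le_trans ht.1 hs.2, le_of_lt hs.1⟩⟩
  · exact fun t ht => ((hβ t (Icc_subset_Icc le_rfl hbb ht)).continuousWithinAt).mono
      (Icc_subset_Icc le_rfl hbb)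
  · intro t ht
    refine (hβ t (Icc_subset_Icc le_rfl hbb (Ico_subset_Icc_self ht))).mono_of_mem_nhdsWithin ?_
    refine mem_nhdsWithin_iff_exists_mem_nhds_inter.mpr
      ⟨Iio b', Iio_mem_nhds (lt_of_lt_of_le ht.2 hbb), fun s hs =>
        ⟨le_trans ht.1 hs.2, le_of_lt hs.1⟩⟩
  · exact h0

/-- Forward global solution on `Ici 0`. -/
theorem forward_exists (f : E → E) (L : NNReal) (hf : LipschitzWith L f) (x₀ : E) :
    ∃ α : ℝ → E, α 0 = x₀ ∧ ∀ t ∈ Ici (0:ℝ), HasDerivWithinAt α (f (α t)) (Ici (0:ℝ)) t := by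
  set ε : ℝ := (2 * ((L:ℝ) + 1))⁻¹ with hεdef
  have hε0 : 0 < ε := by positivity
  choose A hA0 hA using seg_exists f L hf x₀
  -- agreement
  have hagree : ∀ (n m : ℕ) (s : ℝ), s ∈ Icc (0:ℝ) (n * ε) → s ∈ Icc (0:ℝ) (m * ε) →
      A n s = A m s := by
    intro n m s hsn hsm
    rcases le_total (n:ℝ) (m:ℝ) with h | h
    · exact seg_unique f L hf (hA n) (hA m) ((hA0 n).trans (hA0 m).symm)
        (by apply mul_le_mul_of_nonneg_right h (le_of_lt hε0)) (by positivity) hsn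
    · exact (seg_unique f L hf (hA m) (hA n) ((hA0 m).trans (hA0 n).symm)
        (by apply mul_le_mul_of_nonneg_right h (le_of_lt hε0)) (by positivity) hsm).symm
  set N : ℝ → ℕ := fun t => ⌈(t + 1) / ε⌉₊ with hN
  have hNmem : ∀ t : ℝ, 0 ≤ t → t ∈ Icc (0:ℝ) ((N t : ℝ) * ε) := by
    intro t ht
    refine ⟨ht, ?_⟩
    have h1 : (t + 1) / ε ≤ (N t : ℝ) := Nat.le_ceil _
    have : t + 1 ≤ (N t : ℝ) * ε := by
      rw [div_le_iff₀ hε0] at h1; linarith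
    linarith
  refine ⟨fun t => A (N t) t, ?_, ?_⟩
  · show A (N 0) 0 = x₀
    rw [hagree (N 0) 0 0 (hNmem 0 le_rfl) (by simp), hA0]
  · intro t ht
    set n : ℕ := N t + 1 with hn
    have hlt : t < (n:ℝ) * ε := by
      have := (hNmem t ht).2
      have hstep : ((N t : ℝ)) * ε < (n:ℝ) * ε := by
        rw [hn]; push_cast; nlinarith
      linarith
    have htn : t ∈ Icc (0:ℝ) ((n:ℝ) * ε) := ⟨ht, le_of_lt hlt⟩
    have heq : EqOn (fun s => A (N s) s) (A n) (Icc (0:ℝ) ((n:ℝ) * ε)) := by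
      intro s hs
      exact hagree (N s) n s (hNmem s hs.1) hs
    have hmem : Icc (0:ℝ) ((n:ℝ) * ε) ∈ nhdsWithin t (Ici (0:ℝ)) := by
      refine mem_nhdsWithin_iff_exists_mem_nhds_inter.mpr
        ⟨Iio ((n:ℝ) * ε), Iio_mem_nhds hlt, fun s hs => ⟨hs.2, le_of_lt hs.1⟩⟩
    have hd : HasDerivWithinAt (A n) (f (A n t)) (Ici (0:ℝ)) t :=
      (hA n t htn).mono_of_mem_nhdsWithin hmem
    rw [show (fun s => A (N s) s) t = A n t from heq htn]
    refine hd.congr_of_eventuallyEq ?_ (heq htn)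
    exact Filter.eventuallyEq_of_mem hmem (fun s hs => heq hs)

/-- Global solution on all of `ℝ` for a Lipschitz vector field. -/
theorem global_exists (f : E → E) (L : NNReal) (hf : LipschitzWith L f) (x₀ : E) :
    ∃ α : ℝ → E, α 0 = x₀ ∧ ∀ t : ℝ, HasDerivAt α (f (α t)) t := by
  obtain ⟨αf, hαf0, hαf⟩ := forward_exists f L hf x₀
  have hnegLip : LipschitzWith L (fun y => -f y) := by
    have : (fun y => -f y) = (fun z => -z) ∘ f := rfl
    rw [this]
    exact hf.neg
  obtain ⟨αb', hαb'0, hαb'⟩ := forward_exists (fun y => -f y) L hnegLip x₀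
  set αb : ℝ → E := fun t => αb' (-t) with hαbdef
  have hαb : ∀ t ∈ Iic (0:ℝ), HasDerivWithinAt αb (f (αb t)) (Iic (0:ℝ)) t := by
    intro t ht
    have h1 : HasDerivWithinAt αb' (-f (αb' (-t))) (Ici (0:ℝ)) (-t) :=
      hαb' (-t) (by simpa using ht)
    have h2 : HasDerivWithinAt (fun s : ℝ => -s) (-1 : ℝ) (Iic (0:ℝ)) t :=
      (hasDerivAt_neg t).hasDerivWithinAt
    have hmaps : MapsTo (fun s : ℝ => -s) (Iic (0:ℝ)) (Ici (0:ℝ)) :=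
      fun s hs => by simpa using hs
    have := HasDerivWithinAt.scomp t h1 h2 hmaps
    simpa [hαbdef, Function.comp_def] using this
  set α : ℝ → E := fun t => if t < 0 then αb t else αf t with hαdef
  have hab0 : αb 0 = αf 0 := by rw [hαbdef]; simp [hαb'0, hαf0]
  have heqf : EqOn α αf (Ici (0:ℝ)) := fun t ht => by
    simp only [hαdef, if_neg (not_lt.mpr (mem_Ici.mp ht))]
  have heqb : EqOn α αb (Iic (0:ℝ)) := by
    intro t ht
    rcases lt_or_eq_of_le (mem_Iic.mp ht) with h | h
    · simp only [hαdef, if_pos h]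
    · subst h; simp only [hαdef, lt_irrefl, if_false, hab0]
  refine ⟨fun t => α t, by show α 0 = x₀; rw [heqf (mem_Ici.mpr (le_refl 0)), hαf0], ?_⟩
  intro t
  show HasDerivAt α (f (α t)) t
  rcases lt_trichotomy t 0 with h | h | h
  · have hd : HasDerivWithinAt αb (f (αb t)) (Iic (0:ℝ)) t := hαb t (le_of_lt h)
    have : HasDerivAt αb (f (αb t)) t := hd.hasDerivAt (Iic_mem_nhds h)
    rw [show α t = αb t from heqb (le_of_lt h)]
    refine this.congr_of_eventuallyEq ?_
    exact Filter.eventuallyEq_of_mem (Iic_mem_nhds h) (fun s hs => heqb hs)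
  · subst h
    have hdf : HasDerivWithinAt α (f (α 0)) (Ici (0:ℝ)) 0 := by
      rw [show α 0 = αf 0 from heqf (mem_Ici.mpr le_rfl)]
      exact ((hαf 0 (mem_Ici.mpr le_rfl)).congr_of_eventuallyEq
        (Filter.eventuallyEq_of_mem self_mem_nhdsWithin (fun s hs => heqf hs)) (heqf (mem_Ici.mpr le_rfl)))
    have hdb : HasDerivWithinAt α (f (α 0)) (Iic (0:ℝ)) 0 := by
      have h0 : α 0 = αb 0 := heqb (mem_Iic.mpr le_rfl)
      rw [show α 0 = αf 0 from heqf (mem_Ici.mpr le_rfl), ← hab0]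
      exact ((hαb 0 (mem_Iic.mpr le_rfl)).congr_of_eventuallyEq
        (Filter.eventuallyEq_of_mem self_mem_nhdsWithin (fun s hs => heqb hs)) h0)
    have := hdb.union hdf
    rw [Iic_union_Ici] at this
    exact this.hasDerivAt (by simp)
  · have hd : HasDerivWithinAt αf (f (αf t)) (Ici (0:ℝ)) t := hαf t (le_of_lt h)
    have : HasDerivAt αf (f (αf t)) t := hd.hasDerivAt (Ici_mem_nhds h)
    rw [show α t = αf t from heqf (le_of_lt h)]
    refine this.congr_of_eventuallyEq ?_
    exact Filter.eventuallyEq_of_mem (Ici_mem_nhds h) (fun s hs => heqf hs)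

theorem shift_solution {f : E → E} {ψ : ℝ → E} (hψ : ∀ t, HasDerivAt ψ (f (ψ t)) t) (c : ℝ) :
    ∀ s, HasDerivAt (fun u => ψ (c + u)) (f (ψ (c + s))) s := by
  intro s
  have h1 : HasDerivAt ψ (f (ψ (c + s))) (c + s) := hψ (c + s)
  have h2 : HasDerivAt (fun u : ℝ => c + u) 1 s := by
    simpa using (hasDerivAt_id s).const_add c
  have := h1.scomp s h2
  simpa [Function.comp_def] using this

theorem uniform_attract [ProperSpace E] (f : E → E) (L : NNReal) (hf : LipschitzWith L f)
    (hstab : ∀ ε > (0 : ℝ), ∃ δ > (0 : ℝ), ∀ φ : ℝ → E,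
      (∀ t, HasDerivAt φ (f (φ t)) t) → ‖φ 0‖ ≤ δ → ∀ t ≥ (0 : ℝ), ‖φ t‖ ≤ ε)
    (hattr : ∀ φ : ℝ → E, (∀ t, HasDerivAt φ (f (φ t)) t) → Tendsto φ atTop (nhds 0)) :
    ∃ T₀ : ℝ, 0 < T₀ ∧ ∀ ψ : ℝ → E, (∀ t, HasDerivAt ψ (f (ψ t)) t) → ‖ψ 0‖ = 1 →
      ∀ τ ≥ T₀, ‖ψ τ‖ ≤ 1 / 16 := by
  obtain ⟨δ, hδpos, hδ⟩ := hstab (1/16) (by norm_num)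
  choose Sol hSol0 hSol using global_exists f L hf
  -- for each x, a time at which the solution from x is within δ/2
  have hx : ∀ x : E, ∃ tx : ℝ, 0 ≤ tx ∧ ∀ t ≥ tx, ‖Sol x t‖ < δ / 2 := by
    intro x
    have := (hattr (Sol x) (hSol x)).norm
    rw [norm_zero] at this
    have hev : ∀ᶠ t in atTop, ‖Sol x t‖ < δ / 2 :=
      this.eventually_lt_const (by linarith)
    obtain ⟨t0, ht0⟩ := hev.exists_forall_of_atTop
    exact ⟨max t0 0, le_max_right _ _, fun t ht => ht0 t (le_trans (le_max_left _ _) ht)⟩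
  choose tx htx0 htx using hx
  set r : E → ℝ := fun x => (δ/2) * Real.exp (-(L:ℝ) * tx x) with hrdef
  have hrpos : ∀ x, 0 < r x := fun x => by positivity
  obtain ⟨fin, hfin⟩ := (isCompact_sphere (0:E) 1).elim_finite_subcover
    (fun x : E => Metric.ball x (r x)) (fun x => Metric.isOpen_ball)
    (fun y hy => mem_iUnion.mpr ⟨y, Metric.mem_ball_self (hrpos y)⟩)
  set T₀ : ℝ := 1 + ∑ x ∈ fin, tx x with hT₀def
  have hT₀pos : 0 < T₀ := by
    have : 0 ≤ ∑ x ∈ fin, tx x := Finset.sum_nonneg (fun x _ => htx0 x)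
    linarith
  have hT₀ge : ∀ x ∈ fin, tx x ≤ T₀ := by
    intro x hxmem
    have := Finset.single_le_sum (f := tx) (fun y _ => htx0 y) hxmem
    linarith
  refine ⟨T₀, hT₀pos, ?_⟩
  intro ψ hψ hψ0 τ hτ
  have hsph : ψ 0 ∈ Metric.sphere (0:E) 1 := by
    simpa [mem_sphere_iff_norm] using hψ0
  obtain ⟨x, hxfin, hxball⟩ := by
    have := hfin hsph
    simpa only [mem_iUnion, exists_prop] using this
  -- Gronwall on [0, tx x]
  have hgron : dist (ψ (tx x)) (Sol x (tx x)) ≤ δ / 2 := by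
    have h := dist_le_of_trajectories_ODE (v := fun _ y => f y) (K := L)
      (fun _ => hf)
      (fun t _ => (hψ t).continuousAt.continuousWithinAt)
      (fun t _ => (hψ t).hasDerivWithinAt)
      (fun t _ => (hSol x t).continuousAt.continuousWithinAt)
      (fun t _ => (hSol x t).hasDerivWithinAt)
      (le_of_lt (by rw [hSol0 x]; exact Metric.mem_ball.mp hxball))
      (tx x) (⟨htx0 x, le_rfl⟩ : tx x ∈ Icc 0 (tx x))
    calc dist (ψ (tx x)) (Sol x (tx x)) ≤ r x * Real.exp ((L:ℝ) * (tx x - 0)) := h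
    _ = δ / 2 := by
        rw [hrdef]
        simp only [sub_zero]
        rw [mul_assoc, ← Real.exp_add]
        ring_nf
        rw [Real.exp_zero]  -- may fail; fix below
        ring
  have hnorm : ‖ψ (tx x)‖ ≤ δ := by
    have h1 : ‖Sol x (tx x)‖ < δ / 2 := htx x (tx x) le_rfl
    calc ‖ψ (tx x)‖ ≤ dist (ψ (tx x)) (Sol x (tx x)) + ‖Sol x (tx x)‖ := by
          rw [dist_eq_norm]
          simpa using norm_add_le (ψ (tx x) - Sol x (tx x)) (Sol x (tx x))
    _ ≤ δ / 2 + δ / 2 := add_le_add hgron (le_of_lt h1)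
    _ = δ := by ring
  have hstab' := hδ (fun u => ψ (tx x + u)) (fun s => shift_solution hψ (tx x) s)
    (by simpa using hnorm) (τ - tx x) (by linarith [hT₀ge x hxfin])
  simpa using hstab'

section TimeChange

variable {ρ : ℝ → ℝ} {c C' : ℝ}

theorem tc_integrable (hm : Measurable ρ) (hc : ∀ s, c ≤ ρ s) (hC : ∀ s, ρ s ≤ C')
    (hcpos : 0 < c) (a b : ℝ) : IntervalIntegrable ρ volume a b := by
  rw [intervalIntegrable_iff]
  have hconst : IntegrableOn (fun _ : ℝ => C') (uIoc a b) volume :=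
    integrableOn_const measure_Ioc_lt_top.ne
  refine Integrable.mono' hconst
    hm.aestronglyMeasurable.restrict (Filter.Eventually.of_forall fun s => ?_)
  rw [Real.norm_eq_abs, abs_of_pos (lt_of_lt_of_le hcpos (hc s))]
  exact hC s

theorem tc_sub (hm : Measurable ρ) (hc : ∀ s, c ≤ ρ s) (hC : ∀ s, ρ s ≤ C') (hcpos : 0 < c)
    (a b : ℝ) :
    (∫ s in (0:ℝ)..b, ρ s) - ∫ s in (0:ℝ)..a, ρ s = ∫ s in a..b, ρ s :=
  integral_interval_sub_left (tc_integrable hm hc hC hcpos 0 b)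
    (tc_integrable hm hc hC hcpos 0 a)

theorem tc_bounds (hm : Measurable ρ) (hc : ∀ s, c ≤ ρ s) (hC : ∀ s, ρ s ≤ C') (hcpos : 0 < c)
    {a b : ℝ} (hab : a ≤ b) :
    c * (b - a) ≤ (∫ s in a..b, ρ s) ∧ (∫ s in a..b, ρ s) ≤ C' * (b - a) := by
  constructor
  · have h := intervalIntegral.integral_mono_on hab (_root_.intervalIntegrable_const (c := c))
      (tc_integrable hm hc hC hcpos a b) (fun s _ => hc s)
    rwa [intervalIntegral.integral_const, smul_eq_mul, mul_comm] at h
  · have h := intervalIntegral.integral_mono_on hab (tc_integrable hm hc hC hcpos a b)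
      (_root_.intervalIntegrable_const (c := C')) (fun s _ => hC s)
    rwa [intervalIntegral.integral_const, smul_eq_mul, mul_comm] at h

theorem tc_strictMono (hm : Measurable ρ) (hc : ∀ s, c ≤ ρ s) (hC : ∀ s, ρ s ≤ C')
    (hcpos : 0 < c) : StrictMono (fun t => ∫ s in (0:ℝ)..t, ρ s) := by
  intro a b hab
  have h1 := (tc_bounds hm hc hC hcpos (le_of_lt hab)).1
  have h2 := tc_sub hm hc hC hcpos a b
  have : 0 < c * (b - a) := by nlinarith
  simp only
  linarith

theorem tc_continuous (hm : Measurable ρ) (hc : ∀ s, c ≤ ρ s) (hC : ∀ s, ρ s ≤ C')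
    (hcpos : 0 < c) : Continuous (fun t => ∫ s in (0:ℝ)..t, ρ s) :=
  intervalIntegral.continuous_primitive (fun a b => tc_integrable hm hc hC hcpos a b) 0

theorem tc_surjective (hm : Measurable ρ) (hc : ∀ s, c ≤ ρ s) (hC : ∀ s, ρ s ≤ C')
    (hcpos : 0 < c) : Function.Surjective (fun t => ∫ s in (0:ℝ)..t, ρ s) := by
  set τ := fun t => ∫ s in (0:ℝ)..t, ρ s with hτ
  intro y
  set b : ℝ := (|y| + 1) / c with hb
  have hbpos : 0 < b := by positivity
  have hτb : y < τ b := by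
    have h1 := (tc_bounds hm hc hC hcpos (le_of_lt hbpos)).1
    have h2 : τ b - τ 0 = ∫ s in (0:ℝ)..b, ρ s := by
      simp [hτ, intervalIntegral.integral_same]
    have h3 : c * b = |y| + 1 := by rw [hb]; field_simp
    have h4 : τ 0 = 0 := by simp [hτ]
    nlinarith [le_abs_self y, abs_nonneg y]
  have hτa : τ (-b) < y := by
    have h1 := (tc_bounds hm hc hC hcpos (le_of_lt (neg_lt_of_neg_lt (by linarith : -(0:ℝ) < b)) : (-b:ℝ) ≤ 0)).1
    have h2 : τ 0 - τ (-b) = ∫ s in (-b:ℝ)..0, ρ s := tc_sub hm hc hC hcpos (-b) 0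
    have h4 : τ 0 = 0 := by simp [hτ]
    have h5 : c * (0 - (-b)) = |y| + 1 := by rw [hb]; field_simp; ring
    nlinarith [neg_abs_le y, abs_nonneg y]
  have := intermediate_value_Icc (le_of_lt (by linarith : (-b:ℝ) < b))
    ((tc_continuous hm hc hC hcpos).continuousOn)
  obtain ⟨t, _, ht⟩ := this ⟨le_of_lt hτa, le_of_lt hτb⟩
  exact ⟨t, ht⟩

/-- Pushforward of the density measure under the time change is Lebesgue. -/
theorem tc_map (hm : Measurable ρ) (hc : ∀ s, c ≤ ρ s) (hC : ∀ s, ρ s ≤ C') (hcpos : 0 < c) :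
    Measure.map (fun t => ∫ s in (0:ℝ)..t, ρ s)
      (volume.withDensity (fun s => ((ρ s).toNNReal : ENNReal))) = volume := by
  set τ := fun t => ∫ s in (0:ℝ)..t, ρ s with hτdef
  have hτm : Measurable τ := (tc_continuous hm hc hC hcpos).measurable
  have hSM : StrictMono τ := tc_strictMono hm hc hC hcpos
  set μ : Measure ℝ := volume.withDensity (fun s => ((ρ s).toNNReal : ENNReal)) with hμdef
  have key : ∀ a b : ℝ, a < b → (Measure.map τ μ) (Ioc a b) = ENNReal.ofReal (b - a) := by
    intro a b hab
    obtain ⟨a', ha'⟩ := tc_surjective hm hc hC hcpos a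
    obtain ⟨b', hb'⟩ := tc_surjective hm hc hC hcpos b
    have hab' : a' < b' := by
      by_contra h
      push_neg at h
      have h2 := hSM.le_iff_le.mpr h
      change τ a' = a at ha'
      change τ b' = b at hb'
      rw [ha', hb'] at h2
      linarith
    change τ a' = a at ha'
    change τ b' = b at hb'
    have hpre : τ ⁻¹' (Ioc a b) = Ioc a' b' := by
      ext s
      simp only [mem_preimage, mem_Ioc]
      rw [← ha', ← hb', hSM.lt_iff_lt, hSM.le_iff_le]
    rw [Measure.map_apply hτm measurableSet_Ioc, hpre, hμdef,
      withDensity_apply _ measurableSet_Ioc]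
    have hnn : (0:ℝ→ℝ) ≤ᵐ[volume.restrict (Ioc a' b')] ρ := by
      apply Filter.Eventually.of_forall
      intro s
      show (0:ℝ) ≤ ρ s
      exact le_of_lt (lt_of_lt_of_le hcpos (hc s))
    have hint : IntegrableOn ρ (Ioc a' b') volume := by
      have := tc_integrable hm hc hC hcpos a' b'
      rwa [intervalIntegrable_iff, uIoc_of_le (le_of_lt hab')] at this
    have heq : ∫⁻ s in Ioc a' b', ((ρ s).toNNReal : ENNReal) ∂volume
        = ENNReal.ofReal (∫ s in Ioc a' b', ρ s ∂volume) := by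
      rw [MeasureTheory.ofReal_integral_eq_lintegral_ofReal hint hnn]
      congr 1
    rw [heq]
    congr 1
    rw [← intervalIntegral.integral_of_le (le_of_lt hab'), ← tc_sub hm hc hC hcpos a' b']
    change τ b' - τ a' = b - a
    rw [ha', hb']
  have hfin : ∀ ⦃a b : ℝ⦄, a < b → (Measure.map τ μ) (Ioc a b) ≠ ⊤ := by
    intro a b hab; rw [key a b hab]; exact ENNReal.ofReal_ne_top
  refine Measure.ext_of_Ioc' _ _ hfin (fun a b hab => ?_)
  rw [key a b hab, Real.volume_Ioc]

/-- Change of variables: the key substitution lemma. -/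
theorem tc_subst (hm : Measurable ρ) (hc : ∀ s, c ≤ ρ s) (hC : ∀ s, ρ s ≤ C') (hcpos : 0 < c)
    (F : ℝ → E) (hF : Continuous F) {t : ℝ} (ht : 0 ≤ t) :
    ∫ s in (0:ℝ)..t, ρ s • F (∫ u in (0:ℝ)..s, ρ u)
      = ∫ u in (0:ℝ)..(∫ s in (0:ℝ)..t, ρ s), F u := by
  set τ := fun t => ∫ s in (0:ℝ)..t, ρ s with hτdef
  have hτm : Measurable τ := (tc_continuous hm hc hC hcpos).measurable
  have hSM : StrictMono τ := tc_strictMono hm hc hC hcpos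
  have hτ0 : τ 0 = 0 := by simp [hτdef]
  have hτt : 0 ≤ τ t := by
    rcases eq_or_lt_of_le ht with h | h
    · rw [← h, hτ0]
    · rw [← hτ0]; exact le_of_lt (hSM h)
  set w : ℝ → NNReal := fun s => (ρ s).toNNReal with hwdef
  have hwm : Measurable w := hm.real_toNNReal
  rw [intervalIntegral.integral_of_le ht, intervalIntegral.integral_of_le hτt]
  show ∫ s in Ioc 0 t, ρ s • F (τ s) = ∫ u in Ioc 0 (τ t), F u
  have hpre : τ ⁻¹' (Ioc 0 (τ t)) = Ioc 0 t := by
    ext s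
    simp only [mem_preimage, mem_Ioc]
    constructor
    · rintro ⟨h1, h2⟩
      rw [← hτ0] at h1
      exact ⟨hSM.lt_iff_lt.mp h1, hSM.le_iff_le.mp h2⟩
    · rintro ⟨h1, h2⟩
      rw [← hτ0]
      exact ⟨hSM.lt_iff_lt.mpr h1, hSM.le_iff_le.mpr h2⟩
  symm
  calc ∫ u in Ioc 0 (τ t), F u
      = ∫ u, F u ∂(volume.restrict (Ioc 0 (τ t))) := rfl
    _ = ∫ u, F u ∂((Measure.map τ (volume.withDensity (fun s => (w s : ENNReal)))).restrict
          (Ioc 0 (τ t))) := by rw [hwdef]; rw [tc_map hm hc hC hcpos]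
    _ = ∫ u, F u ∂(Measure.map τ ((volume.withDensity (fun s => (w s : ENNReal))).restrict
          (Ioc 0 t))) := by
        rw [Measure.restrict_map hτm measurableSet_Ioc, hpre]
    _ = ∫ s, F (τ s) ∂((volume.withDensity (fun s => (w s : ENNReal))).restrict (Ioc 0 t)) := by
        rw [integral_map hτm.aemeasurable hF.aestronglyMeasurable]
    _ = ∫ s, F (τ s) ∂((volume.restrict (Ioc 0 t)).withDensity (fun s => (w s : ENNReal))) := by
        rw [restrict_withDensity measurableSet_Ioc]
    _ = ∫ s in Ioc 0 t, (w s) • F (τ s) := by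
        rw [integral_withDensity_eq_integral_smul hwm]
    _ = ∫ s in Ioc 0 t, ρ s • F (τ s) := by
        apply setIntegral_congr_fun measurableSet_Ioc
        intro s _
        show ((ρ s).toNNReal : NNReal) • F (τ s) = ρ s • F (τ s)
        rw [NNReal.smul_def, Real.coe_toNNReal _
          (le_of_lt (lt_of_lt_of_le hcpos (hc s)))]

theorem tc_smul_integrable (hm : Measurable ρ) (hc : ∀ s, c ≤ ρ s) (hC : ∀ s, ρ s ≤ C')
    (hcpos : 0 < c) (g : ℝ → E) (hg : Continuous g) (a b : ℝ) :
    IntervalIntegrable (fun s => ρ s • g s) volume a b := by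
  rw [intervalIntegrable_iff]
  obtain ⟨M, hM⟩ := (isCompact_uIcc (a := a) (b := b)).exists_bound_of_continuousOn
    hg.continuousOn
  have hmeas : AEStronglyMeasurable (fun s => ρ s • g s) (volume.restrict (uIoc a b)) :=
    (hm.aemeasurable.aestronglyMeasurable.smul hg.aestronglyMeasurable).restrict
  have hconst : IntegrableOn (fun _ : ℝ => C' * M) (uIoc a b) volume :=
    integrableOn_const measure_Ioc_lt_top.ne
  refine Integrable.mono' hconst hmeas ?_
  filter_upwards [ae_restrict_mem measurableSet_uIoc] with s hs
  rw [norm_smul, Real.norm_eq_abs, abs_of_pos (lt_of_lt_of_le hcpos (hc s))]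
  exact mul_le_mul (hC s) (hM s (uIoc_subset_uIcc hs))
    (norm_nonneg _) (le_trans (le_of_lt hcpos) (le_trans (hc s) (hC s)))

/-- Identification of the Carathéodory solution with the time-changed autonomous solution. -/
theorem tc_ident (f : E → E) (L : NNReal) (hf : LipschitzWith L f)
    (hm : Measurable ρ) (hc : ∀ s, c ≤ ρ s) (hC : ∀ s, ρ s ≤ C') (hcpos : 0 < c)
    (φ α : ℝ → E) (hφc : Continuous φ)
    (hint : ∀ t ≥ (0:ℝ), φ t = φ 0 + ∫ s in (0:ℝ)..t, ρ s • f (φ s))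
    (hα0 : α 0 = φ 0) (hα : ∀ t, HasDerivAt α (f (α t)) t) :
    ∀ t ≥ (0:ℝ), φ t = α (∫ s in (0:ℝ)..t, ρ s) := by
  set τ : ℝ → ℝ := fun t => ∫ s in (0:ℝ)..t, ρ s with hτdef
  have hτc : Continuous τ :=
    intervalIntegral.continuous_primitive (fun a b => tc_integrable hm hc hC hcpos a b) 0
  have hαc : Continuous α := continuous_iff_continuousAt.mpr fun t => (hα t).continuousAt
  have hK : (0:ℝ) ≤ C' * L := mul_nonneg (le_trans (le_of_lt hcpos) (le_trans (hc 0) (hC 0)))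
    L.coe_nonneg
  -- the difference and its norm
  set u : ℝ → ℝ := fun t => ‖φ t - α (τ t)‖ with hudef
  have huc : Continuous u := (hφc.sub (hαc.comp hτc)).norm
  have hunn : ∀ t, 0 ≤ u t := fun t => norm_nonneg _
  -- key integral identity
  have hkey : ∀ t ≥ (0:ℝ), φ t - α (τ t)
      = ∫ s in (0:ℝ)..t, ρ s • (f (φ s) - f (α (τ s))) := by
    intro t ht
    have hτ0 : τ 0 = 0 := by simp [hτdef]
    have hFTC : α (τ t) - α 0 = ∫ v in (0:ℝ)..(τ t), f (α v) := by
      symm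
      apply intervalIntegral.integral_eq_sub_of_hasDerivAt
      · exact fun v _ => hα v
      · exact ((hf.continuous.comp hαc).intervalIntegrable _ _)
    have hsubst := tc_subst hm hc hC hcpos (fun v => f (α v)) (hf.continuous.comp hαc) ht
    have hαeq : α (τ t) = φ 0 + ∫ s in (0:ℝ)..t, ρ s • f (α (τ s)) := by
      simp only [hτdef] at hFTC ⊢
      rw [← hα0]
      simp only [hsubst]
      rw [← hFTC]
      abel
    rw [hint t ht, hαeq, add_sub_add_left_eq_sub]
    have hI1 : IntervalIntegrable (fun s => ρ s • f (φ s)) volume 0 t :=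
      tc_smul_integrable hm hc hC hcpos _ (hf.continuous.comp hφc) 0 t
    have hI2 : IntervalIntegrable (fun s => ρ s • f (α (τ s))) volume 0 t :=
      tc_smul_integrable hm hc hC hcpos _ (hf.continuous.comp (hαc.comp hτc)) 0 t
    rw [← intervalIntegral.integral_sub hI1 hI2]
    have : ∀ s, ρ s • f (φ s) - ρ s • f (α (τ s)) = ρ s • (f (φ s) - f (α (τ s))) :=
      fun s => (smul_sub _ _ _).symm
    simp only [this]
  -- integral inequality
  have hineq : ∀ t ≥ (0:ℝ), u t ≤ |∫ s in (0:ℝ)..t, C' * (L:ℝ) * u s| := by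
    intro t ht
    rw [hudef]
    simp only
    rw [hkey t ht]
    refine intervalIntegral.norm_integral_le_abs_of_norm_le ?_ ?_
    · filter_upwards [ae_restrict_mem measurableSet_uIoc] with s _
      rw [norm_smul, Real.norm_eq_abs, abs_of_pos (lt_of_lt_of_le hcpos (hc s))]
      have hlip : ‖f (φ s) - f (α (τ s))‖ ≤ (L:ℝ) * ‖φ s - α (τ s)‖ := by
        have := hf.dist_le_mul (φ s) (α (τ s))
        rwa [dist_eq_norm, dist_eq_norm] at this
      calc ρ s * ‖f (φ s) - f (α (τ s))‖ ≤ C' * ((L:ℝ) * ‖φ s - α (τ s)‖) :=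
        mul_le_mul (hC s) hlip (norm_nonneg _) (le_trans (le_of_lt hcpos)
          (le_trans (hc s) (hC s)))
      _ = C' * (L:ℝ) * u s := by rw [hudef]; ring
    · exact ((continuous_const.mul huc).intervalIntegrable _ _)
  -- Gronwall on W
  set W : ℝ → ℝ := fun t => ∫ s in (0:ℝ)..t, C' * (L:ℝ) * u s with hWdef
  have hWd : ∀ t : ℝ, HasDerivAt W (C' * (L:ℝ) * u t) t := by
    intro t
    exact intervalIntegral.integral_hasDerivAt_right
      ((continuous_const.mul huc).intervalIntegrable _ _)
      ((continuous_const.mul huc).aestronglyMeasurable.stronglyMeasurableAtFilter)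
      (continuous_const.mul huc).continuousAt
  intro t ht
  have hzero : ∀ b ≥ (0:ℝ), ∀ s ∈ Icc (0:ℝ) b, ‖W s‖ ≤ 0 := by
    intro b hb
    have := norm_le_gronwallBound_of_norm_deriv_right_le (f := W)
      (f' := fun s => C' * (L:ℝ) * u s) (δ := 0) (K := C' * (L:ℝ)) (ε := 0) (a := 0) (b := b)
      (fun s _ => (hWd s).continuousAt.continuousWithinAt)
      (fun s _ => (hWd s).hasDerivWithinAt)
      (by simp [hWdef])
      ?_
    · intro s hs
      have h := this s hs
      rwa [gronwallBound_ε0, zero_mul] at h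
    · intro s hs
      have h1 : u s ≤ |W s| := hineq s hs.1
      have h2 : ‖C' * (L:ℝ) * u s‖ = C' * (L:ℝ) * u s := by
        rw [Real.norm_eq_abs, abs_of_nonneg (mul_nonneg hK (hunn s))]
      rw [h2, Real.norm_eq_abs]
      calc C' * (L:ℝ) * u s ≤ C' * (L:ℝ) * |W s| :=
        mul_le_mul_of_nonneg_left h1 hK
      _ = C' * (L:ℝ) * |W s| + 0 := by ring
  have hu0 : u t = 0 := by
    have h1 : u t ≤ |W t| := hineq t ht
    have h2 : ‖W t‖ ≤ 0 := hzero t ht t ⟨ht, le_rfl⟩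
    rw [Real.norm_eq_abs] at h2
    have := hunn t
    linarith
  have : φ t - α (τ t) = 0 := by
    rwa [hudef, norm_eq_zero] at hu0
  have := sub_eq_zero.mp this
  exact this


end TimeChange
end AuxODE

/-- **Lemma 5.** If the origin is the unique globally asymptotically stable equilibrium of
`ẋ = h_∞(x)` (`h_∞` Lipschitz, `h_∞(0) = 0`), then there is `T > 0`, depending only on
`h_∞`, `d`, `C`, such that every (Carathéodory) solution of `ẋ(t) = ρ(t) h_∞(x(t))` with
measurable `ρ : [0,∞) → [1/d, C]` and `‖x(0)‖ = 1` satisfies `‖x(t)‖ < 1/8` for `t ≥ T`. -/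
theorem time_rescaled_ode_stability
    {d : ℕ} (hd : 1 ≤ d) (C : ℝ) (hC : (d : ℝ)⁻¹ ≤ C)
    (hinf : (Fin d → ℝ) → (Fin d → ℝ))
    (L : NNReal) (hLip : LipschitzWith L hinf) (hinf0 : hinf 0 = 0)
    -- Lyapunov stability of the origin
    (hstab : ∀ ε > (0 : ℝ), ∃ δ > (0 : ℝ), ∀ φ : ℝ → (Fin d → ℝ),
      (∀ t, HasDerivAt φ (hinf (φ t)) t) → ‖φ 0‖ ≤ δ → ∀ t ≥ (0 : ℝ), ‖φ t‖ ≤ ε)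
    -- global attractivity of the origin
    (hattr : ∀ φ : ℝ → (Fin d → ℝ),
      (∀ t, HasDerivAt φ (hinf (φ t)) t) → Tendsto φ atTop (nhds 0)) :
    ∃ T : ℝ, 0 < T ∧ ∀ ρ : ℝ → ℝ, Measurable ρ →
      (∀ t ≥ (0 : ℝ), (d : ℝ)⁻¹ ≤ ρ t ∧ ρ t ≤ C) →
      ∀ φ : ℝ → (Fin d → ℝ), ContinuousOn φ (Set.Ici 0) → ‖φ 0‖ = 1 →
        (∀ t ≥ (0 : ℝ), φ t = φ 0 + ∫ s in (0 : ℝ)..t, ρ s • hinf (φ s)) →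
        ∀ t ≥ T, ‖φ t‖ < 1 / 8 := by
  have hdpos : (0:ℝ) < (d:ℝ)⁻¹ := by
    have : (0:ℝ) < (d:ℝ) := by exact_mod_cast Nat.lt_of_lt_of_le Nat.zero_lt_one hd
    positivity
  have hd1 : (1:ℝ) ≤ (d:ℝ) := by exact_mod_cast hd
  obtain ⟨T₀, hT₀pos, hT₀⟩ := uniform_attract hinf L hLip hstab hattr
  refine ⟨(d:ℝ) * T₀, by positivity, ?_⟩
  intro ρ hρm hρb φ hφcont hφ0 hφint t htT
  have ht0 : (0:ℝ) ≤ t := le_trans (by positivity) htT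
  -- extended rate function
  set ρ' : ℝ → ℝ := fun s => if 0 ≤ s then ρ s else 1 with hρ'def
  have hρ'm : Measurable ρ' := Measurable.ite measurableSet_Ici hρm measurable_const
  set C' : ℝ := max C 1 with hC'def
  have hc : ∀ s, (d:ℝ)⁻¹ ≤ ρ' s := by
    intro s
    by_cases h : 0 ≤ s
    · simp only [hρ'def, if_pos h]; exact (hρb s h).1
    · simp only [hρ'def, if_neg h]
      rw [inv_le_one_iff₀]; right; exact hd1
  have hC' : ∀ s, ρ' s ≤ C' := by
    intro s
    by_cases h : 0 ≤ s
    · simp only [hρ'def, if_pos h]; exact le_trans (hρb s h).2 (le_max_left _ _)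
    · simp only [hρ'def, if_neg h]; exact le_max_right _ _
  -- extended solution function
  set Φ : ℝ → (Fin d → ℝ) := fun s => φ (max s 0) with hΦdef
  have hΦc : Continuous Φ :=
    hφcont.comp_continuous (continuous_id.max continuous_const)
      (fun x => Set.mem_Ici.mpr (le_max_right x 0))
  have hΦeq : ∀ s ≥ (0:ℝ), Φ s = φ s := fun s hs => by
    simp only [hΦdef, max_eq_left hs]
  have hΦint : ∀ u ≥ (0:ℝ), Φ u = Φ 0 + ∫ s in (0:ℝ)..u, ρ' s • hinf (Φ s) := by
    intro u hu
    rw [hΦeq u hu, hΦeq 0 le_rfl, hφint u hu]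
    congr 1
    rw [intervalIntegral.integral_of_le hu, intervalIntegral.integral_of_le hu]
    apply setIntegral_congr_fun measurableSet_Ioc
    intro s hs
    have hs0 : (0:ℝ) ≤ s := le_of_lt hs.1
    simp only [hρ'def, if_pos hs0, hΦeq s hs0]
  obtain ⟨α, hα0, hα⟩ := global_exists hinf L hLip (φ 0)
  have hα0' : α 0 = Φ 0 := by rw [hα0, hΦeq 0 le_rfl]
  have hident := tc_ident hinf L hLip hρ'm hc hC' hdpos Φ α hΦc hΦint hα0' hα
  -- time-change lower bound
  set τt : ℝ := ∫ s in (0:ℝ)..t, ρ' s with hτtdef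
  have hτt : T₀ ≤ τt := by
    have h1 := (tc_bounds hρ'm hc hC' hdpos ht0).1
    have h2 : (d:ℝ)⁻¹ * t ≥ T₀ := by
      rw [ge_iff_le]
      have hdR : (0:ℝ) < (d:ℝ) := by positivity
      rw [show (d:ℝ)⁻¹ * t = t / (d:ℝ) by ring, le_div_iff₀ hdR]
      calc T₀ * (d:ℝ) = (d:ℝ) * T₀ := by ring
      _ ≤ t := htT
    rw [hτtdef]
    calc T₀ ≤ (d:ℝ)⁻¹ * t := h2
    _ = (d:ℝ)⁻¹ * (t - 0) := by ring
    _ ≤ ∫ s in (0:ℝ)..t, ρ' s := h1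
  have hαnorm : ‖α 0‖ = 1 := by rw [hα0, hφ0]
  have := hT₀ α hα hαnorm τt hτt
  have hφτ : φ t = α τt := by
    rw [← hΦeq t ht0]
    exact hident t ht0
  rw [hφτ]
  linarith
end

section
/- Let h : ℝ^d → ℝ^d be Lipschitz with modulus L, let h_c(x) := h(cx)/c for c ≥ 1, and let h_∞ : ℝ^d → ℝ^d be Lipschitz with modulus L and h_∞(0) = 0. Fix T > 0, C̄ > 0, set B := e^{C̄ L T} and ε(c) := C̄ · sup_{‖y‖ ≤ B} ‖h_c(y) − h_∞(y)‖. Let λ*, λ' : [0,T] → ℝ^{d×d} be measurable matrix-valued functions with ‖λ*(s)‖ ≤ C̄ and ‖λ'(s)‖ ≤ C̄ for all s. Let x ∈ ℝ^d with ‖x‖ = 1, let φ_∞ : [0,T] → ℝ^d be absolutely continuous with φ_∞(0) = x and φ_∞'(t) = λ*(t) h_∞(φ_∞(t)) a.e., and let φ : [0,T] → ℝ^d be absolutely continuous with φ(0) = x and φ'(t) = λ'(t) h_c(φ(t)) a.e. If, for some ε̄ > 0, ‖∫_0^t (λ'(s) − λ*(s)) h_∞(φ_∞(s)) ds‖ ≤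 ε̄ for all t ∈ [0,T], then ‖φ(t) − φ_∞(t)‖ ≤ (ε̄ + ε(c) T) e^{C̄ L T} for all t ∈ [0,T]. -/
open MeasureTheory Filter intervalIntegral

private lemma meas_apply_aux {d : ℕ} {lam : ℝ → (Fin d → ℝ) →L[ℝ] (Fin d → ℝ)}
    (hmeas : ∀ v : Fin d → ℝ, Measurable fun s => lam s v)
    {v : ℝ → Fin d → ℝ} (hv : Measurable v) :
    Measurable fun s => lam s (v s) := by
  have key : ∀ s, lam s (v s) =
      ∑ j : Fin d, (v s j) • lam s (fun k => if j = k then (1:ℝ) else 0) := by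
    intro s
    conv_lhs => rw [pi_eq_sum_univ (v s), map_sum]
    refine Finset.sum_congr rfl fun j _ => ?_
    exact (lam s).map_smul _ _
  simp only [key]
  exact Finset.measurable_sum _ fun j _ =>
    ((measurable_pi_apply j).comp hv).smul (hmeas _)

private lemma aemeas_apply_aux {d : ℕ} {lam : ℝ → (Fin d → ℝ) →L[ℝ] (Fin d → ℝ)}
    (hmeas : ∀ v : Fin d → ℝ, Measurable fun s => lam s v)
    {v : ℝ → Fin d → ℝ} {μ : Measure ℝ} (hv : AEMeasurable v μ) :
    AEMeasurable (fun s => lam s (v s)) μ := by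
  refine ⟨fun s => lam s (hv.mk v s), meas_apply_aux hmeas hv.measurable_mk,
    hv.ae_eq_mk.mono fun s hs => by dsimp only; rw [hs]⟩

private lemma integrable_apply_aux {d : ℕ} {T Cbar : ℝ} (hT : 0 ≤ T) (hCbar : 0 ≤ Cbar)
    {lam : ℝ → (Fin d → ℝ) →L[ℝ] (Fin d → ℝ)}
    (hmeas : ∀ v : Fin d → ℝ, Measurable fun s => lam s v)
    (hbd : ∀ s ∈ Set.Icc (0:ℝ) T, ‖lam s‖ ≤ Cbar)
    {v : ℝ → Fin d → ℝ} (hv : ContinuousOn v (Set.Icc 0 T))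
    {t : ℝ} (ht : t ∈ Set.Icc (0:ℝ) T) :
    IntervalIntegrable (fun s => lam s (v s)) volume 0 t := by
  obtain ⟨M, hM'⟩ := isCompact_Icc.bddAbove_image (continuous_norm.comp_continuousOn hv)
  have hM : ∀ s ∈ Set.Icc (0:ℝ) T, ‖v s‖ ≤ M := fun s hs => hM' (Set.mem_image_of_mem _ hs)
  rw [intervalIntegrable_iff_integrableOn_Ioc_of_le ht.1]
  have hsub : Set.Ioc (0:ℝ) t ⊆ Set.Icc 0 T := fun s hs => ⟨hs.1.le, hs.2.trans ht.2⟩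
  have hvm : AEMeasurable v (volume.restrict (Set.Ioc 0 t)) :=
    (hv.mono hsub).aemeasurable measurableSet_Ioc
  have hm : AEStronglyMeasurable (fun s => lam s (v s)) (volume.restrict (Set.Ioc 0 t)) :=
    (aemeas_apply_aux hmeas hvm).aestronglyMeasurable
  refine Integrable.mono' (integrable_const (Cbar * M)) hm ?_
  rw [ae_restrict_iff' measurableSet_Ioc]
  refine Filter.Eventually.of_forall fun s hs => ?_
  calc ‖lam s (v s)‖ ≤ ‖lam s‖ * ‖v s‖ := (lam s).le_opNorm _
    _ ≤ Cbar * M := mul_le_mul (hbd s (hsub hs)) (hM s (hsub hs)) (norm_nonneg _) hCbar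

private lemma gronwall_int_aux {ψ : ℝ → ℝ} {T A K : ℝ} (hT : 0 ≤ T) (hA : 0 ≤ A) (hK : 0 ≤ K)
    (hψ : Continuous ψ) (hψnn : ∀ t, 0 ≤ ψ t)
    (hineq : ∀ t ∈ Set.Icc (0:ℝ) T, ψ t ≤ A + K * ∫ s in (0:ℝ)..t, ψ s) :
    ∀ t ∈ Set.Icc (0:ℝ) T, ψ t ≤ A * Real.exp (K * t) := by
  set F : ℝ → ℝ := fun u => A + K * ∫ s in (0:ℝ)..u, ψ s with hF
  have hFd : ∀ t : ℝ, HasDerivAt F (K * ψ t) t := by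
    intro t
    have := intervalIntegral.integral_hasDerivAt_right
      (hψ.intervalIntegrable 0 t) hψ.aestronglyMeasurable.stronglyMeasurableAtFilter
      hψ.continuousAt
    exact (this.const_mul K).const_add A
  have hFC : Continuous F := continuous_iff_continuousAt.2 fun t => (hFd t).continuousAt
  have hFnn : ∀ t ∈ Set.Icc (0:ℝ) T, 0 ≤ F t := by
    intro t ht
    have : 0 ≤ ∫ s in (0:ℝ)..t, ψ s :=
      intervalIntegral.integral_nonneg ht.1 fun s _ => hψnn s
    have := mul_nonneg hK this
    simp only [hF]; linarith
  have key := norm_le_gronwallBound_of_norm_deriv_right_le (f := F)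
    (f' := fun t => K * ψ t) (δ := A) (K := K) (ε := 0) (a := 0) (b := T)
    hFC.continuousOn (fun t _ => (hFd t).hasDerivWithinAt)
    (by simp [hF, Real.norm_eq_abs, abs_of_nonneg hA])
    (fun t ht => by
      have htIcc : t ∈ Set.Icc (0:ℝ) T := ⟨ht.1, ht.2.le⟩
      rw [Real.norm_eq_abs, Real.norm_eq_abs, abs_of_nonneg (mul_nonneg hK (hψnn t)),
        abs_of_nonneg (hFnn t htIcc), add_zero]
      exact mul_le_mul_of_nonneg_left (hineq t htIcc) hK)
  intro t ht
  have h1 : ψ t ≤ F t := hineq t ht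
  have h2 := key t ht
  rw [Real.norm_eq_abs, abs_of_nonneg (hFnn t ht), gronwallBound_ε0, sub_zero] at h2
  linarith

/-- **Lemma 6 (core estimate).** With `h, h_∞` Lipschitz of modulus `L`, `h_∞(0) = 0`,
`h_c(y) = h(cy)/c`, `B = e^{C̄LT}`, `ε(c) = C̄·sup_{‖y‖≤B} ‖h_c(y) − h_∞(y)‖`: if `φ_∞`
solves `ẋ = λ*(t) h_∞(x)` and `φ` solves `ẋ = λ'(t) h_c(x)` from the same unit-norm initial
condition, with `‖λ*(s)‖, ‖λ'(s)‖ ≤ C̄` and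
`‖∫_0^t (λ'(s) − λ*(s)) h_∞(φ_∞(s)) ds‖ ≤ ε̄` on `[0,T]`, then
`‖φ(t) − φ_∞(t)‖ ≤ (ε̄ + ε(c) T) e^{C̄LT}` on `[0,T]`. -/
theorem ode_perturbation_estimate
    {d : ℕ} (hd : 1 ≤ d) (T L Cbar c εbar : ℝ)
    (hT : 0 < T) (hL : 0 ≤ L) (hCbar : 0 < Cbar) (hc : 1 ≤ c) (hεbar : 0 < εbar)
    (h hinf : (Fin d → ℝ) → (Fin d → ℝ))
    (hhLip : ∀ a b : Fin d → ℝ, ‖h a - h b‖ ≤ L * ‖a - b‖)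
    (hinfLip : ∀ a b : Fin d → ℝ, ‖hinf a - hinf b‖ ≤ L * ‖a - b‖)
    (hinf0 : hinf 0 = 0)
    (lamstar lam' : ℝ → (Fin d → ℝ) →L[ℝ] (Fin d → ℝ))
    (hstarmeas : ∀ v : Fin d → ℝ, Measurable fun s => lamstar s v)
    (h'meas : ∀ v : Fin d → ℝ, Measurable fun s => lam' s v)
    (hstarbd : ∀ s ∈ Set.Icc (0 : ℝ) T, ‖lamstar s‖ ≤ Cbar)
    (h'bd : ∀ s ∈ Set.Icc (0 : ℝ) T, ‖lam' s‖ ≤ Cbar)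
    (x₀ : Fin d → ℝ) (hx₀ : ‖x₀‖ = 1)
    (φinf φ : ℝ → Fin d → ℝ)
    (hφinfc : ContinuousOn φinf (Set.Icc 0 T)) (hφc : ContinuousOn φ (Set.Icc 0 T))
    (hφinf0 : φinf 0 = x₀) (hφ0 : φ 0 = x₀)
    (hφinf : ∀ t ∈ Set.Icc (0 : ℝ) T,
      φinf t = x₀ + ∫ s in (0 : ℝ)..t, lamstar s (hinf (φinf s)))
    (hφ : ∀ t ∈ Set.Icc (0 : ℝ) T,
      φ t = x₀ + ∫ s in (0 : ℝ)..t, lam' s (c⁻¹ • h (c • φ s)))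
    (hclose : ∀ t ∈ Set.Icc (0 : ℝ) T,
      ‖∫ s in (0 : ℝ)..t, (lam' s - lamstar s) (hinf (φinf s))‖ ≤ εbar) :
    ∀ t ∈ Set.Icc (0 : ℝ) T,
      ‖φ t - φinf t‖ ≤
        (εbar + (Cbar * sSup ((fun y : Fin d → ℝ =>
            ‖c⁻¹ • h (c • y) - hinf y‖) '' Metric.closedBall 0 (Real.exp (Cbar * L * T)))) * T)
          * Real.exp (Cbar * L * T) := by
  have hTle : (0:ℝ) ≤ T := hT.le
  have hc0 : (0:ℝ) < c := lt_of_lt_of_le one_pos hc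
  set K : ℝ := Cbar * L with hKdef
  have hK0 : 0 ≤ K := mul_nonneg hCbar.le hL
  set B : ℝ := Real.exp (Cbar * L * T) with hBdef
  have hBpos : 0 < B := Real.exp_pos _
  set g : (Fin d → ℝ) → (Fin d → ℝ) := fun y => c⁻¹ • h (c • y) with hg
  set εs : ℝ := sSup ((fun y : Fin d → ℝ =>
      ‖c⁻¹ • h (c • y) - hinf y‖) '' Metric.closedBall 0 B) with hεsdef
  -- Lipschitz bound for g
  have hgLip : ∀ a b : Fin d → ℝ, ‖g a - g b‖ ≤ L * ‖a - b‖ := by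
    intro a b
    have e : g a - g b = c⁻¹ • (h (c • a) - h (c • b)) := by rw [hg]; simp [smul_sub]
    rw [e, norm_smul, Real.norm_eq_abs, abs_of_nonneg (inv_nonneg.2 hc0.le)]
    calc c⁻¹ * ‖h (c • a) - h (c • b)‖
        ≤ c⁻¹ * (L * ‖c • a - c • b‖) :=
          mul_le_mul_of_nonneg_left (hhLip _ _) (inv_nonneg.2 hc0.le)
      _ = L * ‖a - b‖ := by
          rw [← smul_sub, norm_smul, Real.norm_eq_abs, abs_of_nonneg hc0.le]
          field_simp
  -- continuity of h, hinf, g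
  have hhC : Continuous h := by
    refine (LipschitzWith.of_dist_le_mul (K := ⟨L, hL⟩) ?_).continuous
    intro a b; rw [dist_eq_norm, dist_eq_norm]; exact hhLip a b
  have hinfC : Continuous hinf := by
    refine (LipschitzWith.of_dist_le_mul (K := ⟨L, hL⟩) ?_).continuous
    intro a b; rw [dist_eq_norm, dist_eq_norm]; exact hinfLip a b
  have hgC : Continuous g := by
    rw [hg]; exact (hhC.comp (continuous_const_smul c)).const_smul c⁻¹
  -- the sup εs
  have hεs' : εs = sSup ((fun y : Fin d → ℝ =>
      ‖g y - hinf y‖) '' Metric.closedBall 0 B) := by rw [hεsdef, hg]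
  have hbdd : BddAbove ((fun y : Fin d → ℝ => ‖g y - hinf y‖) '' Metric.closedBall 0 B) :=
    ((isCompact_closedBall _ _).image ((hgC.sub hinfC).norm)).bddAbove
  have hεs_le : ∀ y : Fin d → ℝ, ‖y‖ ≤ B → ‖g y - hinf y‖ ≤ εs := by
    intro y hy
    rw [hεs']
    exact le_csSup hbdd ⟨y, by simpa [Metric.mem_closedBall, dist_zero_right] using hy, rfl⟩
  have hεs0 : 0 ≤ εs :=
    le_trans (norm_nonneg _) (hεs_le 0 (by simpa using hBpos.le))
  -- bound for hinf
  have hinfb : ∀ y : Fin d → ℝ, ‖hinf y‖ ≤ L * ‖y‖ := by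
    intro y; simpa [hinf0] using hinfLip y 0
  -- restated integral equation for φ
  have hφ' : ∀ u ∈ Set.Icc (0:ℝ) T,
      φ u = x₀ + ∫ s in (0:ℝ)..u, lam' s (g (φ s)) := by
    intro u hu; simp only [hg]; exact hφ u hu
  -- integrability of the four base integrands
  have hi1 : ∀ ⦃u⦄, u ∈ Set.Icc (0:ℝ) T →
      IntervalIntegrable (fun s => lamstar s (hinf (φinf s))) volume 0 u := fun u hu =>
    integrable_apply_aux hTle hCbar.le hstarmeas hstarbd
      (hinfC.comp_continuousOn hφinfc) hu
  have hi2 : ∀ ⦃u⦄, u ∈ Set.Icc (0:ℝ) T →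
      IntervalIntegrable (fun s => lam' s (g (φ s))) volume 0 u := fun u hu =>
    integrable_apply_aux hTle hCbar.le h'meas h'bd (hgC.comp_continuousOn hφc) hu
  have hi3 : ∀ ⦃u⦄, u ∈ Set.Icc (0:ℝ) T →
      IntervalIntegrable (fun s => lam' s (g (φinf s))) volume 0 u := fun u hu =>
    integrable_apply_aux hTle hCbar.le h'meas h'bd (hgC.comp_continuousOn hφinfc) hu
  have hi4 : ∀ ⦃u⦄, u ∈ Set.Icc (0:ℝ) T →
      IntervalIntegrable (fun s => lam' s (hinf (φinf s))) volume 0 u := fun u hu =>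
    integrable_apply_aux hTle hCbar.le h'meas h'bd (hinfC.comp_continuousOn hφinfc) hu
  -- the extended norm of φinf
  set ψi : ℝ → ℝ := Set.IccExtend hTle ((Set.Icc (0:ℝ) T).restrict fun s => ‖φinf s‖)
    with hψidef
  have hψiC : Continuous ψi :=
    Continuous.Icc_extend' (continuous_norm.comp_continuousOn hφinfc).restrict
  have hψie : ∀ s ∈ Set.Icc (0:ℝ) T, ψi s = ‖φinf s‖ := by
    intro s hs; rw [hψidef, Set.IccExtend_of_mem hTle _ hs]; rfl
  have hψinn : ∀ s, 0 ≤ ψi s := by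
    intro s; rw [hψidef, Set.IccExtend_apply]; exact norm_nonneg _
  -- bound ‖φinf s‖ ≤ B on [0, T]
  have hφinfB : ∀ s ∈ Set.Icc (0:ℝ) T, ‖φinf s‖ ≤ B := by
    have key : ∀ u ∈ Set.Icc (0:ℝ) T, ψi u ≤ 1 + K * ∫ s in (0:ℝ)..u, ψi s := by
      intro u hu
      have hsub : Set.Ioc (0:ℝ) u ⊆ Set.Icc 0 T := fun s hs => ⟨hs.1.le, hs.2.trans hu.2⟩
      have hnb : ‖∫ s in (0:ℝ)..u, lamstar s (hinf (φinf s))‖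
          ≤ |∫ s in (0:ℝ)..u, K * ψi s| := by
        refine intervalIntegral.norm_integral_le_abs_of_norm_le ?_
          ((continuous_const.mul hψiC).intervalIntegrable _ _)
        rw [Set.uIoc_of_le hu.1, ae_restrict_iff' measurableSet_Ioc]
        refine Filter.Eventually.of_forall fun s hs => ?_
        have hsIcc := hsub hs
        rw [hψie s hsIcc, hKdef]
        calc ‖lamstar s (hinf (φinf s))‖ ≤ ‖lamstar s‖ * ‖hinf (φinf s)‖ :=
              (lamstar s).le_opNorm _
          _ ≤ Cbar * (L * ‖φinf s‖) :=
              mul_le_mul (hstarbd s hsIcc) (hinfb _) (norm_nonneg _) hCbar.le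
          _ = Cbar * L * ‖φinf s‖ := by ring
      have hintnn : 0 ≤ ∫ s in (0:ℝ)..u, K * ψi s :=
        intervalIntegral.integral_nonneg hu.1 fun s _ => mul_nonneg hK0 (hψinn s)
      rw [abs_of_nonneg hintnn, intervalIntegral.integral_const_mul] at hnb
      rw [hψie u hu, hφinf u hu]
      calc ‖x₀ + ∫ s in (0:ℝ)..u, lamstar s (hinf (φinf s))‖
          ≤ ‖x₀‖ + ‖∫ s in (0:ℝ)..u, lamstar s (hinf (φinf s))‖ := norm_add_le _ _
        _ ≤ 1 + K * ∫ s in (0:ℝ)..u, ψi s := by rw [hx₀]; linarith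
    intro s hs
    have := gronwall_int_aux hTle zero_le_one hK0 hψiC hψinn key s hs
    rw [hψie s hs] at this
    calc ‖φinf s‖ ≤ 1 * Real.exp (K * s) := this
      _ ≤ B := by
          rw [one_mul, hBdef, ← hKdef]
          exact Real.exp_le_exp.2 (mul_le_mul_of_nonneg_left hs.2 hK0)
  -- the extended norm of φ - φinf
  set ψd : ℝ → ℝ := Set.IccExtend hTle ((Set.Icc (0:ℝ) T).restrict fun s => ‖φ s - φinf s‖)
    with hψddef
  have hψdC : Continuous ψd :=
    Continuous.Icc_extend' ((hφc.sub hφinfc).norm).restrict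
  have hψde : ∀ s ∈ Set.Icc (0:ℝ) T, ψd s = ‖φ s - φinf s‖ := by
    intro s hs; rw [hψddef, Set.IccExtend_of_mem hTle _ hs]; rfl
  have hψdnn : ∀ s, 0 ≤ ψd s := by
    intro s; rw [hψddef, Set.IccExtend_apply]; exact norm_nonneg _
  set A : ℝ := εbar + Cbar * εs * T with hAdef
  have hA0 : 0 ≤ A := by
    have : 0 ≤ Cbar * εs * T := mul_nonneg (mul_nonneg hCbar.le hεs0) hTle
    rw [hAdef]; linarith
  -- the main inequality
  have key : ∀ u ∈ Set.Icc (0:ℝ) T, ψd u ≤ A + K * ∫ s in (0:ℝ)..u, ψd s := by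
    intro u hu
    have hsub : Set.Ioc (0:ℝ) u ⊆ Set.Icc 0 T := fun s hs => ⟨hs.1.le, hs.2.trans hu.2⟩
    -- decomposition of φ u - φinf u
    have e1 : φ u - φinf u =
        (∫ s in (0:ℝ)..u, (lam' s (g (φ s)) - lam' s (g (φinf s))))
        + (∫ s in (0:ℝ)..u, (lam' s (g (φinf s)) - lam' s (hinf (φinf s))))
        + (∫ s in (0:ℝ)..u, (lam' s (hinf (φinf s)) - lamstar s (hinf (φinf s)))) := by
      rw [hφ' u hu, hφinf u hu,
        intervalIntegral.integral_sub (hi2 hu) (hi3 hu),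
        intervalIntegral.integral_sub (hi3 hu) (hi4 hu),
        intervalIntegral.integral_sub (hi4 hu) (hi1 hu)]
      abel
    -- term 3
    have t3 : ‖∫ s in (0:ℝ)..u, (lam' s (hinf (φinf s)) - lamstar s (hinf (φinf s)))‖
        ≤ εbar := by
      have := hclose u hu
      simpa [ContinuousLinearMap.sub_apply] using this
    -- term 2
    have t2 : ‖∫ s in (0:ℝ)..u, (lam' s (g (φinf s)) - lam' s (hinf (φinf s)))‖
        ≤ Cbar * εs * T := by
      have hb : ∀ s ∈ Set.uIoc (0:ℝ) u,
          ‖lam' s (g (φinf s)) - lam' s (hinf (φinf s))‖ ≤ Cbar * εs := by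
        intro s hs
        rw [Set.uIoc_of_le hu.1] at hs
        have hsIcc := hsub hs
        rw [← map_sub]
        calc ‖lam' s (g (φinf s) - hinf (φinf s))‖
            ≤ ‖lam' s‖ * ‖g (φinf s) - hinf (φinf s)‖ := (lam' s).le_opNorm _
          _ ≤ Cbar * εs :=
              mul_le_mul (h'bd s hsIcc) (hεs_le _ (hφinfB s hsIcc)) (norm_nonneg _) hCbar.le
      calc ‖∫ s in (0:ℝ)..u, (lam' s (g (φinf s)) - lam' s (hinf (φinf s)))‖
          ≤ Cbar * εs * |u - 0| := intervalIntegral.norm_integral_le_of_norm_le_const hb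
        _ ≤ Cbar * εs * T := by
            rw [sub_zero, abs_of_nonneg hu.1]
            exact mul_le_mul_of_nonneg_left hu.2 (mul_nonneg hCbar.le hεs0)
    -- term 1
    have t1 : ‖∫ s in (0:ℝ)..u, (lam' s (g (φ s)) - lam' s (g (φinf s)))‖
        ≤ K * ∫ s in (0:ℝ)..u, ψd s := by
      have hnb : ‖∫ s in (0:ℝ)..u, (lam' s (g (φ s)) - lam' s (g (φinf s)))‖
          ≤ |∫ s in (0:ℝ)..u, K * ψd s| := by
        refine intervalIntegral.norm_integral_le_abs_of_norm_le ?_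
          ((continuous_const.mul hψdC).intervalIntegrable _ _)
        rw [Set.uIoc_of_le hu.1, ae_restrict_iff' measurableSet_Ioc]
        refine Filter.Eventually.of_forall fun s hs => ?_
        have hsIcc := hsub hs
        rw [hψde s hsIcc, ← map_sub, hKdef]
        calc ‖lam' s (g (φ s) - g (φinf s))‖
            ≤ ‖lam' s‖ * ‖g (φ s) - g (φinf s)‖ := (lam' s).le_opNorm _
          _ ≤ Cbar * (L * ‖φ s - φinf s‖) :=
              mul_le_mul (h'bd s hsIcc) (hgLip _ _) (norm_nonneg _) hCbar.le
          _ = Cbar * L * ‖φ s - φinf s‖ := by ring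
      have hintnn : 0 ≤ ∫ s in (0:ℝ)..u, K * ψd s :=
        intervalIntegral.integral_nonneg hu.1 fun s _ => mul_nonneg hK0 (hψdnn s)
      rwa [abs_of_nonneg hintnn, intervalIntegral.integral_const_mul] at hnb
    rw [hψde u hu, e1, hAdef]
    calc ‖_ + _ + _‖ ≤ _ := norm_add₃_le
      _ ≤ εbar + Cbar * εs * T + K * ∫ s in (0:ℝ)..u, ψd s := by linarith
      _ = _ := by ring
  intro t ht
  have := gronwall_int_aux hTle hA0 hK0 hψdC hψdnn key t ht
  rw [hψde t ht] at this
  calc ‖φ t - φinf t‖ ≤ A * Real.exp (K * t) := this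
    _ ≤ A * Real.exp (Cbar * L * T) := by
        refine mul_le_mul_of_nonneg_left ?_ hA0
        rw [← hKdef]
        exact Real.exp_le_exp.2 (mul_le_mul_of_nonneg_left ht.2 hK0)
    _ = (εbar + Cbar * εs * T) * B := by rw [hAdef, hBdef]
end
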